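/- arXiv:0911.2408 — 6 statements merged into one kernel-verified Lean document; each statement's English description precedes it below -/
import Mathlib

section
/- Let σ be the shift permutation of ℤ (a ↦ a+1) and fix n ≥ 1. For every nontrivial reduced word v on n+1 letters, the set of tuples (τ₁,…,τₙ) ∈ Sym(ℤ)ⁿ such that v(σ,τ₁,…,τₙ) ≠ 1 is open and dense in Sym(ℤ)ⁿ. -/
noncomputable section

/-- The topology of pointwise convergence on the symmetric group of `ℤ`:
induced from the product topology on `ℤ → ℤ` (with `ℤ` discrete). -/
instance permTop : TopologicalSpace (Equiv.Perm ℤ) :=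
  TopologicalSpace.induced (fun π : Equiv.Perm ℤ => (π : ℤ → ℤ)) Pi.topologicalSpace

/-- The shift permutation `a ↦ a + 1` of `ℤ`. -/
def shift : Equiv.Perm ℤ := Equiv.addRight 1

/-- The orbit of `a : ℤ` under the cyclic group generated by `γ`. -/
def permOrbit (γ : Equiv.Perm ℤ) (a : ℤ) : Set ℤ := {b | ∃ k : ℤ, (γ ^ k) a = b}

/-- Evaluation of a word on `n + 1` letters at `(σ, τ₁, …, τₙ)`, where the letter `0`
is sent to the shift `σ`. -/
def evalWord {n : ℕ} (τ : Fin n → Equiv.Perm ℤ) : FreeGroup (Fin (n + 1)) →* Equiv.Perm ℤ :=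
  FreeGroup.lift (Fin.cons shift τ)

namespace Stmt7Aux

section Traj

variable {n : ℕ}

/-- trajectory of the marker point -/
def traj (B : ℤ) (L : List (Fin (n+1) × Bool)) : ℕ → ℤ
  | 0 => B
  | j+1 =>
    if (L.getD j (0,true)).1 = 0 then
      traj B L j + (if (L.getD j (0,true)).2 then 1 else -1)
    else B * ((j : ℤ) + 2)

/-- last fresh-choice index -/
def lev (L : List (Fin (n+1) × Bool)) : ℕ → ℕ
  | 0 => 0
  | j+1 => if (L.getD j (0,true)).1 = 0 then lev L j else j+1

variable {B : ℤ} {L : List (Fin (n+1) × Bool)}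

lemma traj_zero : traj B L 0 = B := rfl

lemma traj_succ (j : ℕ) : traj B L (j+1) =
    if (L.getD j (0,true)).1 = 0 then
      traj B L j + (if (L.getD j (0,true)).2 then 1 else -1)
    else B * ((j : ℤ) + 2) := rfl

lemma lev_zero : lev L 0 = 0 := rfl

lemma lev_succ (j : ℕ) : lev L (j+1) =
    if (L.getD j (0,true)).1 = 0 then lev L j else j+1 := rfl

lemma lev_le : ∀ j, lev L j ≤ j := by
  intro j
  induction j with
  | zero => exact le_refl 0
  | succ j ih =>
    rw [lev_succ]
    split
    · exact ih.trans (Nat.le_succ j)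
    · exact le_refl _

lemma lev_mono {j j' : ℕ} (h : j ≤ j') : lev L j ≤ lev L j' := by
  obtain ⟨d, rfl⟩ := Nat.exists_eq_add_of_le h
  clear h
  induction d with
  | zero => exact le_refl _
  | succ m ih =>
    have h2 : lev L (j + m) ≤ lev L (j + m + 1) := by
      rw [lev_succ]
      split
      · exact le_refl _
      · exact (lev_le _).trans (by omega)
    have : j + (m+1) = (j + m) + 1 := by omega
    rw [this]
    exact ih.trans h2

lemma traj_bound (j : ℕ) :
    B * ((lev L j : ℤ) + 1) - ((j:ℤ) - (lev L j : ℤ)) ≤ traj B L j ∧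
    traj B L j ≤ B * ((lev L j : ℤ) + 1) + ((j:ℤ) - (lev L j : ℤ)) := by
  induction j with
  | zero => simp [traj_zero, lev_zero]
  | succ j ih =>
    have hle : (lev L j : ℤ) ≤ (j : ℤ) := by exact_mod_cast lev_le (L := L) j
    rw [traj_succ, lev_succ]
    obtain ⟨h1, h2⟩ := ih
    by_cases hσ : (L.getD j (0,true)).1 = 0
    · rw [if_pos hσ, if_pos hσ]
      push_cast
      constructor
      · split <;> linarith
      · split <;> linarith
    · rw [if_neg hσ, if_neg hσ]
      push_cast
      constructor <;> linarith

lemma sigma_between : ∀ j m, lev L j ≤ m → m < j → (L.getD m (0,true)).1 = 0 := by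
  intro j
  induction j with
  | zero => intro m _ h; omega
  | succ k ih =>
    intro m h1 h2
    rw [lev_succ] at h1
    by_cases hσ : (L.getD k (0,true)).1 = 0
    · rw [if_pos hσ] at h1
      rcases Nat.lt_or_ge m k with h3 | h3
      · exact ih m h1 h3
      · have : m = k := by omega
        subst this; exact hσ
    · rw [if_neg hσ] at h1
      omega

lemma sign_run (hred : ∀ k, k + 1 < L.length →
      (L.getD k (0,true)).1 = (L.getD (k+1) (0,true)).1 →
      (L.getD k (0,true)).2 = (L.getD (k+1) (0,true)).2)
    (j j' : ℕ) (hj' : j' ≤ L.length)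
    (hσ : ∀ k, j ≤ k → k < j' → (L.getD k (0,true)).1 = 0) :
    ∀ m, j ≤ m → m < j' → (L.getD m (0,true)).2 = (L.getD j (0,true)).2 := by
  intro m
  induction m with
  | zero =>
    intro h _
    have : j = 0 := by omega
    subst this; rfl
  | succ k ih =>
    intro h1 h2
    rcases Nat.lt_or_ge j (k+1) with h3 | h3
    · have hk : j ≤ k := by omega
      have hkj' : k < j' := by omega
      have e1 := ih hk hkj'
      have e2 := hred k (by omega) (by rw [hσ k hk hkj', hσ (k+1) h1 h2])
      rw [← e2, e1]
    · have : j = k + 1 := by omega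
      subst this; rfl

lemma traj_run (j j' : ℕ) (s : Bool)
    (hσ : ∀ k, j ≤ k → k < j' → (L.getD k (0,true)).1 = 0 ∧ (L.getD k (0,true)).2 = s) :
    ∀ m, j ≤ m → m ≤ j' → traj B L m = traj B L j + (if s then 1 else -1) * ((m:ℤ) - (j:ℤ)) := by
  intro m
  induction m with
  | zero =>
    intro h _
    have : j = 0 := by omega
    subst this; simp
  | succ k ih =>
    intro h1 h2
    rcases Nat.lt_or_ge j (k+1) with h3 | h3
    · have hk : j ≤ k := by omega
      have hkj' : k < j' := by omega
      obtain ⟨e1, e2⟩ := hσ k hk hkj'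
      have ihk := ih hk (by omega)
      rw [traj_succ, if_pos e1, e2, ihk]
      push_cast
      cases s <;> simp <;> ring
    · have : j = k + 1 := by omega
      subst this; simp
  
lemma traj_inj (hB : 2 * (L.length : ℤ) + 1 ≤ B)
    (hred : ∀ k, k + 1 < L.length →
      (L.getD k (0,true)).1 = (L.getD (k+1) (0,true)).1 →
      (L.getD k (0,true)).2 = (L.getD (k+1) (0,true)).2)
    {j j' : ℕ} (h : j < j') (hj' : j' ≤ L.length) :
    traj B L j ≠ traj B L j' := by
  have hlen0 : (0:ℤ) ≤ (L.length : ℤ) := by positivity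
  have hB0 : (0:ℤ) < B := by linarith
  have hk : lev L j ≤ lev L j' := lev_mono (le_of_lt h)
  have hjl : (j : ℤ) ≤ (L.length : ℤ) := by exact_mod_cast (le_of_lt (lt_of_lt_of_le h hj'))
  have hj'l : (j' : ℤ) ≤ (L.length : ℤ) := by exact_mod_cast hj'
  have hlevj : (lev L j : ℤ) ≤ j := by exact_mod_cast lev_le (L := L) j
  have hlevj' : (lev L j' : ℤ) ≤ j' := by exact_mod_cast lev_le (L := L) j'
  rcases lt_or_eq_of_le hk with hlt | heq
  · obtain ⟨_, h2⟩ := traj_bound (B := B) (L := L) j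
    obtain ⟨h3, _⟩ := traj_bound (B := B) (L := L) j'
    have hcast : (lev L j : ℤ) + 1 ≤ (lev L j' : ℤ) := by exact_mod_cast hlt
    intro hcontra
    have hmul : B * ((lev L j : ℤ) + 1 + 1) ≤ B * ((lev L j' : ℤ) + 1) := by
      apply mul_le_mul_of_nonneg_left _ (le_of_lt hB0)
      linarith
    linarith
  · have hσ : ∀ k, j ≤ k → k < j' → (L.getD k (0,true)).1 = 0 := by
      intro k h1 h2
      apply sigma_between j' k _ h2
      rw [← heq]
      exact (lev_le j).trans h1
    set s := (L.getD j (0,true)).2 with hs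
    have hsr := sign_run hred j j' hj' hσ
    have hrun := traj_run (B := B) j j' s (fun k h1 h2 => ⟨hσ k h1 h2, hsr k h1 h2⟩)
    have hfin := hrun j' (le_of_lt h) (le_refl _)
    intro hcontra
    rw [← hcontra] at hfin
    have hne : (j:ℤ) < (j':ℤ) := by exact_mod_cast h
    rcases s with _ | _ <;> simp at hfin <;> omega


lemma traj_lb {n : ℕ} {B : ℤ} {L : List (Fin (n+1) × Bool)} (hB0 : 0 ≤ B) {j : ℕ}
    (hj : j ≤ L.length) : B - L.length ≤ traj B L j := by
  obtain ⟨h1, _⟩ := traj_bound (B := B) (L := L) j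
  have hlev : (lev L j : ℤ) ≤ (j : ℤ) := by exact_mod_cast lev_le (L := L) j
  have h2 : (j:ℤ) ≤ (L.length : ℤ) := by exact_mod_cast hj
  have h3 : (0:ℤ) ≤ (lev L j : ℤ) := by positivity
  nlinarith [mul_nonneg hB0 h3]

lemma exists_perm_extend (G : Finset (ℤ × ℤ))
    (h1 : ∀ p ∈ G, ∀ q ∈ G, p.1 = q.1 → p = q)
    (h2 : ∀ p ∈ G, ∀ q ∈ G, p.2 = q.2 → p = q) :
    ∃ π : Equiv.Perm ℤ, ∀ p ∈ G, π p.1 = p.2 := by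
  classical
  set s : Set ℤ := ↑(G.image Prod.fst) with hs
  set t : Set ℤ := ↑(G.image Prod.snd) with ht
  -- the forward bijection s → t
  have hchoose : ∀ a : s, ∃! p, p ∈ G ∧ p.1 = (a : ℤ) := by
    rintro ⟨a, ha⟩
    simp only [hs, Finset.coe_image, Set.mem_image, Finset.mem_coe] at ha
    obtain ⟨p, hp, hpa⟩ := ha
    refine ⟨p, ⟨hp, hpa⟩, ?_⟩
    rintro q ⟨hq, hqa⟩
    exact h1 q hq p hp (by rw [hqa, hpa])
  choose pf hpf hupf using fun a => (hchoose a).exists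
  have hpf1 : ∀ a : s, (pf a).1 = (a : ℤ) := hupf
  have hpfG : ∀ a : s, pf a ∈ G := hpf
  have hmemt : ∀ a : s, (pf a).2 ∈ t := by
    intro a
    simp only [ht, Finset.coe_image, Set.mem_image, Finset.mem_coe]
    exact ⟨pf a, hpfG a, rfl⟩
  let f : s → t := fun a => ⟨(pf a).2, hmemt a⟩
  have hfinj : Function.Injective f := by
    intro a b hab
    have : (pf a).2 = (pf b).2 := congrArg Subtype.val hab
    have := h2 _ (hpfG a) _ (hpfG b) this
    have h3 : (a : ℤ) = (b : ℤ) := by rw [← hpf1 a, ← hpf1 b, this]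
    exact Subtype.ext h3
  have hfsurj : Function.Surjective f := by
    rintro ⟨b, hb⟩
    simp only [ht, Finset.coe_image, Set.mem_image, Finset.mem_coe] at hb
    obtain ⟨p, hp, hpb⟩ := hb
    have hamem : p.1 ∈ s := by
      simp only [hs, Finset.coe_image, Set.mem_image, Finset.mem_coe]
      exact ⟨p, hp, rfl⟩
    refine ⟨⟨p.1, hamem⟩, ?_⟩
    have : pf ⟨p.1, hamem⟩ = p := h1 _ (hpfG _) p hp (hpf1 _)
    apply Subtype.ext
    show (pf ⟨p.1, hamem⟩).2 = b
    rw [this, hpb]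
  let e₁ : s ≃ t := Equiv.ofBijective f ⟨hfinj, hfsurj⟩
  have hsfin : s.Finite := (G.image Prod.fst).finite_toSet
  have htfin : t.Finite := (G.image Prod.snd).finite_toSet
  haveI : Infinite ↥(sᶜ) := (hsfin.infinite_compl).to_subtype
  haveI : Infinite ↥(tᶜ) := (htfin.infinite_compl).to_subtype
  let e₂ : ↥(sᶜ) ≃ ↥(tᶜ) := Nonempty.some nonempty_equiv_of_countable
  haveI : DecidablePred (· ∈ s) := fun a => Classical.dec _
  haveI : DecidablePred (· ∈ t) := fun a => Classical.dec _
  let π : Equiv.Perm ℤ :=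
    ((Equiv.Set.sumCompl s).symm.trans ((e₁.sumCongr e₂).trans (Equiv.Set.sumCompl t)))
  refine ⟨π, ?_⟩
  intro p hp
  have hpmem : p.1 ∈ s := by
    simp only [hs, Finset.coe_image, Set.mem_image, Finset.mem_coe]
    exact ⟨p, hp, rfl⟩
  have h4 : (Equiv.Set.sumCompl s).symm p.1 = Sum.inl ⟨p.1, hpmem⟩ :=
    Equiv.Set.sumCompl_symm_apply_of_mem hpmem
  show (Equiv.Set.sumCompl t) ((e₁.sumCongr e₂) ((Equiv.Set.sumCompl s).symm p.1)) = p.2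
  rw [h4]
  simp only [Equiv.sumCongr_apply, Sum.map_inl, Equiv.Set.sumCompl_apply_inl]
  show ((f ⟨p.1, hpmem⟩ : t) : ℤ) = p.2
  have : pf ⟨p.1, hpmem⟩ = p := h1 _ (hpfG _) p hp (hpf1 _)
  show (pf ⟨p.1, hpmem⟩).2 = p.2
  rw [this]


end Traj

lemma no_cancel_toWord {α} [DecidableEq α] (v : FreeGroup α) (d : α × Bool) :
    ∀ k, k + 1 < v.toWord.length →
      (v.toWord.getD k d).1 = (v.toWord.getD (k+1) d).1 →
      (v.toWord.getD k d).2 = (v.toWord.getD (k+1) d).2 := by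
  intro k hk h1
  by_contra hne
  set w := v.toWord with hwdef
  have hw : FreeGroup.reduce w = w := FreeGroup.reduce_toWord v
  have hk1 : k < w.length := by omega
  have hgk : w.getD k d = w[k] := List.getD_eq_getElem w d hk1
  have hgk1 : w.getD (k+1) d = w[k+1] := List.getD_eq_getElem w d hk
  rw [hgk, hgk1] at h1 hne
  have hy : w[k+1] = (w[k].1, !w[k].2) := by
    have h2 : w[k+1].2 = !w[k].2 := Bool.eq_not_of_ne (fun h => hne h.symm)
    have h3 : w[k+1].1 = w[k].1 := h1.symm
    exact Prod.ext h3 h2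
  have hdecomp : w = w.take k ++ (w[k].1, w[k].2) :: (w[k].1, !w[k].2) :: w.drop (k+2) := by
    conv_lhs => rw [← List.take_append_drop k w]
    congr 1
    rw [List.drop_eq_getElem_cons hk1]
    congr 1
    rw [List.drop_eq_getElem_cons hk, ← hy]
  exact FreeGroup.reduce.not (hw.trans hdecomp)

lemma no_cancel_reverse {α} [DecidableEq α] (v : FreeGroup α) (d : α × Bool)
    (L : List (α × Bool)) (hL : L = v.toWord.reverse) :
    ∀ k, k + 1 < L.length →
      (L.getD k d).1 = (L.getD (k+1) d).1 →
      (L.getD k d).2 = (L.getD (k+1) d).2 := by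
  intro k hk h1
  subst hL
  set w := v.toWord with hwdef
  have hlen : w.reverse.length = w.length := List.length_reverse (as := w)
  rw [hlen] at hk
  have hk1 : k < w.length := by omega
  have e1 : w.reverse.getD k d = w[w.length - 1 - k] := by
    rw [List.getD_eq_getElem _ d (by rw [hlen]; omega)]
    exact List.getElem_reverse _
  have e2 : w.reverse.getD (k+1) d = w[w.length - 1 - (k+1)] := by
    rw [List.getD_eq_getElem _ d (by rw [hlen]; omega)]
    exact List.getElem_reverse _
  set a := w.length - 1 - (k+1) with ha
  have ha1 : w.length - 1 - k = a + 1 := by omega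
  rw [e1, e2] at h1 ⊢
  have g1 : w[w.length - 1 - k] = w.getD (w.length - 1 - k) d :=
    (List.getD_eq_getElem w d (by omega)).symm
  have g2 : w[w.length - 1 - (k+1)] = w.getD (w.length - 1 - (k+1)) d :=
    (List.getD_eq_getElem w d (by omega)).symm
  rw [g1, g2] at h1 ⊢
  rw [← ha, ha1] at h1 ⊢
  exact (no_cancel_toWord v d a (by rw [← hwdef]; omega) h1.symm).symm


lemma continuous_eval (a : ℤ) : Continuous (fun π : Equiv.Perm ℤ => π a) :=
  (continuous_apply a).comp continuous_induced_dom

lemma isOpen_app_eq (a b : ℤ) : IsOpen {π : Equiv.Perm ℤ | π a = b} :=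
  (continuous_eval a).isOpen_preimage {b} (isOpen_discrete _)

lemma isClosed_app_eq (a b : ℤ) : IsClosed {π : Equiv.Perm ℤ | π a = b} :=
  (isClosed_discrete ({b} : Set ℤ)).preimage (continuous_eval a)

instance : ContinuousMul (Equiv.Perm ℤ) := by
  constructor
  apply continuous_induced_rng.2
  apply continuous_pi
  intro a
  show Continuous fun p : Equiv.Perm ℤ × Equiv.Perm ℤ => p.1 (p.2 a)
  have h2 : Continuous fun p : Equiv.Perm ℤ × Equiv.Perm ℤ => (p.1, p.2 a) :=
    continuous_fst.prodMk ((continuous_eval a).comp continuous_snd)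
  have h3 : Continuous fun q : Equiv.Perm ℤ × ℤ => q.1 q.2 := by
    rw [continuous_discrete_rng]
    intro c
    have : (fun q : Equiv.Perm ℤ × ℤ => q.1 q.2) ⁻¹' {c} =
        ⋃ b : ℤ, {π : Equiv.Perm ℤ | π b = c} ×ˢ ({b} : Set ℤ) := by
      ext ⟨π, b⟩
      constructor
      · intro h
        exact Set.mem_iUnion.2 ⟨b, h, rfl⟩
      · rintro h
        obtain ⟨w, hw1, hw2⟩ := Set.mem_iUnion.1 h
        simp only [Set.mem_singleton_iff] at hw2
        subst hw2
        exact hw1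
    rw [this]
    exact isOpen_iUnion fun b => (isOpen_app_eq b c).prod (isOpen_discrete _)
  exact h3.comp h2

instance : ContinuousInv (Equiv.Perm ℤ) := by
  constructor
  apply continuous_induced_rng.2
  apply continuous_pi
  intro a
  show Continuous fun π : Equiv.Perm ℤ => π⁻¹ a
  rw [continuous_discrete_rng]
  intro b
  have : (fun π : Equiv.Perm ℤ => π⁻¹ a) ⁻¹' {b} = {π : Equiv.Perm ℤ | π b = a} := by
    ext π
    simp only [Set.mem_preimage, Set.mem_singleton_iff, Set.mem_setOf_eq]
    constructor
    · intro h
      rw [← h]; exact (Equiv.eq_symm_apply π).mp rfl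
    · intro h
      rw [← h]; exact Equiv.Perm.inv_eq_iff_eq.mpr rfl
  rw [this]
  exact isOpen_app_eq b a

instance : IsTopologicalGroup (Equiv.Perm ℤ) := ⟨⟩

lemma continuous_evalWord {n : ℕ} (v : FreeGroup (Fin (n + 1))) :
    Continuous fun τ : Fin n → Equiv.Perm ℤ => evalWord τ v := by
  induction v using FreeGroup.induction_on with
  | C1 => simpa using continuous_const
  | of i =>
    have : ∀ τ : Fin n → Equiv.Perm ℤ, evalWord τ (FreeGroup.of i : FreeGroup (Fin (n+1))) = (Fin.cons shift τ : Fin (n+1) → Equiv.Perm ℤ) i := by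
      intro τ
      show evalWord τ (FreeGroup.of i) = _
      simp [evalWord]
    rw [funext this]
    induction i using Fin.cases with
    | zero =>
      simp only [Fin.cons_zero]
      exact continuous_const
    | succ k =>
      simp only [Fin.cons_succ]
      exact continuous_apply k
  | inv_of i h => simp only [map_inv]; exact h.inv
  | mul x y hx hy => simp only [map_mul]; exact hx.mul hy

lemma isOpen_ne_one {n : ℕ} (v : FreeGroup (Fin (n + 1))) :
    IsOpen {τ : Fin n → Equiv.Perm ℤ | evalWord τ v ≠ 1} := by
  have h1 : IsClosed ({1} : Set (Equiv.Perm ℤ)) := by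
    have : ({1} : Set (Equiv.Perm ℤ)) = ⋂ a : ℤ, {π : Equiv.Perm ℤ | π a = a} := by
      ext π
      simp only [Set.mem_singleton_iff, Set.mem_iInter, Set.mem_setOf_eq]
      constructor
      · rintro rfl a; rfl
      · intro h; ext a; exact h a
    rw [this]
    exact isClosed_iInter fun a => isClosed_app_eq a a
  have h2 := (h1.preimage (continuous_evalWord v)).isOpen_compl
  exact h2


lemma key {n : ℕ} (v : FreeGroup (Fin (n+1))) (hv : v ≠ 1)
    (τ₀ : Fin n → Equiv.Perm ℤ) (F : Finset (Fin n × ℤ)) :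
    ∃ τ : Fin n → Equiv.Perm ℤ,
      evalWord τ v ≠ 1 ∧ ∀ p ∈ F, τ p.1 p.2 = τ₀ p.1 p.2 := by
  classical
  set L : List (Fin (n+1) × Bool) := v.toWord.reverse with hL
  set ℓ : ℕ := L.length with hl
  have hred := no_cancel_reverse v (0, true) L hL
  have hℓpos : 1 ≤ ℓ := by
    rw [hl, hL, List.length_reverse]
    have : v.toWord ≠ [] := fun h => hv (FreeGroup.toWord_eq_nil_iff.1 h)
    exact List.length_pos_iff.2 this
  set S : ℕ := F.sup (fun p => (|p.2| ⊔ |τ₀ p.1 p.2|).toNat) with hS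
  have hSbound : ∀ p ∈ F, |p.2| ≤ (S:ℤ) ∧ |τ₀ p.1 p.2| ≤ (S:ℤ) := by
    intro p hp
    have h1 : (|p.2| ⊔ |τ₀ p.1 p.2|).toNat ≤ S :=
      Finset.le_sup (f := fun p => (|p.2| ⊔ |τ₀ p.1 p.2|).toNat) hp
    have h2 : (0:ℤ) ≤ |p.2| ⊔ |τ₀ p.1 p.2| := le_trans (abs_nonneg _) le_sup_left
    have h3 : |p.2| ⊔ |τ₀ p.1 p.2| ≤ (S:ℤ) := by
      rw [← Int.toNat_of_nonneg h2]; exact_mod_cast h1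
    exact ⟨le_trans le_sup_left h3, le_trans le_sup_right h3⟩
  have hS0 : (0:ℤ) ≤ (S:ℤ) := by positivity
  set B : ℤ := (S:ℤ) + 2 * (ℓ:ℤ) + 1 with hB
  have hB2 : 2 * (L.length : ℤ) + 1 ≤ B := by rw [hB, ← hl]; linarith
  have hB0 : (0:ℤ) ≤ B := by rw [hB]; positivity
  have htlb : ∀ j, j ≤ ℓ → (S:ℤ) < traj B L j := by
    intro j hj
    have := traj_lb (B := B) (L := L) hB0 (j := j) (by rw [← hl]; exact hj)
    rw [← hl] at this
    omega
  have trajInj : ∀ {u u' : ℕ}, u ≤ ℓ → u' ≤ ℓ → traj B L u = traj B L u' → u = u' := by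
    intro u u' hu hu' he
    rcases Nat.lt_trichotomy u u' with h | h | h
    · exact absurd he (traj_inj hB2 hred h (by rw [← hl]; exact hu'))
    · exact h
    · exact absurd he.symm (traj_inj hB2 hred h (by rw [← hl]; exact hu))
  -- pair sets
  set np : Fin n → Finset (ℤ × ℤ) := fun i =>
    ((Finset.range ℓ).filter (fun j => (L.getD j (0,true)).1 = i.succ)).image
      (fun j => if (L.getD j (0,true)).2 then (traj B L j, traj B L (j+1))
                else (traj B L (j+1), traj B L j)) with hnp
  set cp : Fin n → Finset (ℤ × ℤ) := fun i =>
    (F.filter (fun p => p.1 = i)).image (fun p => (p.2, τ₀ i p.2)) with hcp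
  -- np components are large
  have hnp_large : ∀ i, ∀ p ∈ np i, (S:ℤ) < p.1 ∧ (S:ℤ) < p.2 := by
    intro i p hp
    rw [hnp] at hp
    obtain ⟨j, hj, rfl⟩ := Finset.mem_image.1 hp
    have hjr : j < ℓ := Finset.mem_range.1 (Finset.mem_filter.1 hj).1
    by_cases hb : (L.getD j (0,true)).2
    · rw [if_pos hb]
      exact ⟨htlb j (le_of_lt hjr), htlb (j+1) hjr⟩
    · rw [if_neg hb]
      exact ⟨htlb (j+1) hjr, htlb j (le_of_lt hjr)⟩
  have hcp_small : ∀ i, ∀ p ∈ cp i, p.1 ≤ (S:ℤ) ∧ p.2 ≤ (S:ℤ) := by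
    intro i p hp
    rw [hcp] at hp
    obtain ⟨r, hr, rfl⟩ := Finset.mem_image.1 hp
    have hrF : r ∈ F := (Finset.mem_filter.1 hr).1
    have hri : r.1 = i := (Finset.mem_filter.1 hr).2
    obtain ⟨ha, hb⟩ := hSbound r hrF
    rw [← hri]
    exact ⟨le_trans (le_abs_self _) ha, le_trans (le_abs_self _) hb⟩
  -- fst injectivity
  have hfst : ∀ i, ∀ p ∈ cp i ∪ np i, ∀ q ∈ cp i ∪ np i, p.1 = q.1 → p = q := by
    intro i p hp q hq h
    rcases Finset.mem_union.1 hp with hp1 | hp1 <;> rcases Finset.mem_union.1 hq with hq1 | hq1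
    · -- both constraints
      rw [hcp] at hp1 hq1
      obtain ⟨r, hr, rfl⟩ := Finset.mem_image.1 hp1
      obtain ⟨r', hr', rfl⟩ := Finset.mem_image.1 hq1
      simp only at h
      rw [h]
    · -- cp fst small, np fst large
      exact absurd h (by
        have := (hcp_small i p hp1).1
        have := (hnp_large i q hq1).1
        omega)
    · exact absurd h.symm (by
        have := (hcp_small i q hq1).1
        have := (hnp_large i p hp1).1
        omega)
    · -- both new
      rw [hnp] at hp1 hq1
      obtain ⟨j, hj, rfl⟩ := Finset.mem_image.1 hp1
      obtain ⟨j', hj', rfl⟩ := Finset.mem_image.1 hq1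
      have hjr : j < ℓ := Finset.mem_range.1 (Finset.mem_filter.1 hj).1
      have hjs : (L.getD j (0,true)).1 = i.succ := by
        have := (Finset.mem_filter.1 hj).2
        simpa using this
      have hj'r : j' < ℓ := Finset.mem_range.1 (Finset.mem_filter.1 hj').1
      have hj's : (L.getD j' (0,true)).1 = i.succ := by
        have := (Finset.mem_filter.1 hj').2
        simpa using this
      by_cases hb : (L.getD j (0,true)).2 <;> by_cases hb' : (L.getD j' (0,true)).2
      · rw [if_pos hb, if_pos hb'] at h ⊢
        simp only at h
        have : j = j' := trajInj (le_of_lt hjr) (le_of_lt hj'r) h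
        rw [this]
      · rw [if_pos hb, if_neg hb'] at h ⊢
        simp only at h
        have he : j = j' + 1 := trajInj (le_of_lt hjr) hj'r h
        exfalso
        have := hred j' (by omega) (by rw [hj's, ← he, hjs])
        rw [← he] at this
        exact hb' (this.trans hb)
      · rw [if_neg hb, if_pos hb'] at h ⊢
        simp only at h
        have he : j + 1 = j' := trajInj hjr (le_of_lt hj'r) h
        exfalso
        have := hred j (by omega) (by rw [hjs, he, hj's])
        rw [he] at this
        exact hb (this.trans hb')
      · rw [if_neg hb, if_neg hb'] at h ⊢
        simp only at h
        have : j + 1 = j' + 1 := trajInj hjr hj'r h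
        have : j = j' := by omega
        rw [this]
  -- snd injectivity
  have hsnd : ∀ i, ∀ p ∈ cp i ∪ np i, ∀ q ∈ cp i ∪ np i, p.2 = q.2 → p = q := by
    intro i p hp q hq h
    rcases Finset.mem_union.1 hp with hp1 | hp1 <;> rcases Finset.mem_union.1 hq with hq1 | hq1
    · rw [hcp] at hp1 hq1
      obtain ⟨r, hr, rfl⟩ := Finset.mem_image.1 hp1
      obtain ⟨r', hr', rfl⟩ := Finset.mem_image.1 hq1
      simp only at h
      have : r.2 = r'.2 := (τ₀ i).injective h
      rw [this]
    · exact absurd h (by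
        have := (hcp_small i p hp1).2
        have := (hnp_large i q hq1).2
        omega)
    · exact absurd h.symm (by
        have := (hcp_small i q hq1).2
        have := (hnp_large i p hp1).2
        omega)
    · rw [hnp] at hp1 hq1
      obtain ⟨j, hj, rfl⟩ := Finset.mem_image.1 hp1
      obtain ⟨j', hj', rfl⟩ := Finset.mem_image.1 hq1
      have hjr : j < ℓ := Finset.mem_range.1 (Finset.mem_filter.1 hj).1
      have hjs : (L.getD j (0,true)).1 = i.succ := by
        have := (Finset.mem_filter.1 hj).2
        simpa using this
      have hj'r : j' < ℓ := Finset.mem_range.1 (Finset.mem_filter.1 hj').1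
      have hj's : (L.getD j' (0,true)).1 = i.succ := by
        have := (Finset.mem_filter.1 hj').2
        simpa using this
      by_cases hb : (L.getD j (0,true)).2 <;> by_cases hb' : (L.getD j' (0,true)).2
      · rw [if_pos hb, if_pos hb'] at h ⊢
        simp only at h
        have : j + 1 = j' + 1 := trajInj hjr hj'r h
        have : j = j' := by omega
        rw [this]
      · rw [if_pos hb, if_neg hb'] at h ⊢
        simp only at h
        have he : j + 1 = j' := trajInj hjr (le_of_lt hj'r) h
        exfalso
        have := hred j (by omega) (by rw [hjs, he, hj's])
        rw [he] at this
        exact hb' (this.symm.trans hb)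
      · rw [if_neg hb, if_pos hb'] at h ⊢
        simp only at h
        have he : j = j' + 1 := trajInj (le_of_lt hjr) hj'r h
        exfalso
        have := hred j' (by omega) (by rw [hj's, ← he, hjs])
        rw [← he] at this
        exact hb (this.symm.trans hb')
      · rw [if_neg hb, if_neg hb'] at h ⊢
        simp only at h
        have : j = j' := trajInj (le_of_lt hjr) (le_of_lt hj'r) h
        rw [this]
  have hext : ∀ i : Fin n, ∃ π : Equiv.Perm ℤ, ∀ p ∈ cp i ∪ np i, π p.1 = p.2 :=
    fun i => exists_perm_extend _ (hfst i) (hsnd i)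
  choose τ hτ using hext
  refine ⟨τ, ?_, ?_⟩
  · -- the word evaluates nontrivially
    set g : Fin (n+1) → Equiv.Perm ℤ := Fin.cons shift τ with hg
    have hg0 : g 0 = shift := Fin.cons_zero _ _
    have hgs : ∀ i : Fin n, g i.succ = τ i := fun i => Fin.cons_succ _ _ _
    have hstep : ∀ j, j < ℓ →
        (cond (L.getD j (0,true)).2 (g (L.getD j (0,true)).1)
          ((g (L.getD j (0,true)).1)⁻¹)) (traj B L j) = traj B L (j+1) := by
      intro j hj
      rcases Fin.eq_zero_or_eq_succ (L.getD j (0,true)).1 with hx | ⟨i, hx⟩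
      · rw [hx, hg0, traj_succ, if_pos hx]
        by_cases hb : (L.getD j (0,true)).2
        · rw [hb]
          show shift _ = _
          simp [shift]
        · rw [Bool.not_eq_true] at hb
          rw [hb]
          show shift⁻¹ _ = _
          rw [Equiv.Perm.inv_def, Equiv.symm_apply_eq]
          simp [shift]
      · rw [hx, hgs]
        by_cases hb : (L.getD j (0,true)).2
        · rw [hb]
          show τ i (traj B L j) = traj B L (j+1)
          apply hτ i (traj B L j, traj B L (j+1))
          apply Finset.mem_union_right
          rw [hnp]
          apply Finset.mem_image.2
          refine ⟨j, Finset.mem_filter.2 ⟨Finset.mem_range.2 hj, by simpa using hx⟩, ?_⟩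
          rw [if_pos hb]
        · rw [Bool.not_eq_true] at hb
          rw [hb]
          show (τ i)⁻¹ (traj B L j) = traj B L (j+1)
          rw [Equiv.Perm.inv_def, Equiv.symm_apply_eq]
          symm
          apply hτ i (traj B L (j+1), traj B L j)
          apply Finset.mem_union_right
          rw [hnp]
          apply Finset.mem_image.2
          refine ⟨j, Finset.mem_filter.2 ⟨Finset.mem_range.2 hj, by simpa using hx⟩, ?_⟩
          rw [if_neg (by simp only [hb]; decide)]
    have heval : ∀ j, j ≤ ℓ →
        (((L.take j).reverse.map (fun x => cond x.2 (g x.1) (g x.1)⁻¹)).prod) (traj B L 0)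
          = traj B L j := by
      intro j
      induction j with
      | zero => intro _; simp
      | succ j ih =>
        intro hj
        have hjl : j < ℓ := by omega
        have hjl' : j < L.length := by rw [← hl]; exact hjl
        have ht : L.take (j+1) = L.take j ++ [L[j]] := by
          rw [List.take_succ, List.getElem?_eq_getElem hjl']
          rfl
        rw [ht, List.reverse_append]
        simp only [List.reverse_singleton, List.singleton_append, List.map_cons,
          List.prod_cons, Equiv.Perm.mul_apply]
        rw [ih (by omega)]
        have hgd : L.getD j (0,true) = L[j] := List.getD_eq_getElem L (0,true) hjl'
        have := hstep j hjl
        rw [hgd] at this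
        exact this
    have hv' : evalWord τ v = (v.toWord.map fun x => cond x.2 (g x.1) (g x.1)⁻¹).prod := by
      show FreeGroup.lift g v = _
      conv_lhs => rw [← FreeGroup.mk_toWord (x := v)]
      exact FreeGroup.lift_mk
    have hfin : evalWord τ v (traj B L 0) = traj B L ℓ := by
      rw [hv']
      have h1 := heval ℓ (le_refl _)
      rw [hl, List.take_length] at h1
      rw [hL, List.reverse_reverse] at h1
      rw [← hL] at h1
      exact h1
    intro hone
    rw [hone] at hfin
    simp only [Equiv.Perm.one_apply] at hfin
    have := trajInj (Nat.zero_le ℓ) (le_refl ℓ) hfin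
    omega
  · intro p hp
    have hmem : (p.2, τ₀ p.1 p.2) ∈ cp p.1 ∪ np p.1 := by
      apply Finset.mem_union_left
      rw [hcp]
      apply Finset.mem_image.2
      exact ⟨p, Finset.mem_filter.2 ⟨hp, by simp⟩, rfl⟩
    exact hτ p.1 _ hmem

lemma dense_ne_one {n : ℕ} (v : FreeGroup (Fin (n+1))) (hv : v ≠ 1) :
    Dense {τ : Fin n → Equiv.Perm ℤ | evalWord τ v ≠ 1} := by
  classical
  rw [dense_iff_inter_open]
  rintro U hU ⟨τ₀, hτ₀⟩
  have hUnhds : U ∈ nhds τ₀ := hU.mem_nhds hτ₀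
  rw [nhds_pi, Filter.mem_pi] at hUnhds
  obtain ⟨I, hIfin, t, ht, htU⟩ := hUnhds
  have hcom : ∀ i, ∃ s ∈ nhds (⇑(τ₀ i) : ℤ → ℤ),
      (fun π : Equiv.Perm ℤ => (π : ℤ → ℤ)) ⁻¹' s ⊆ t i := by
    intro i
    have h1 := ht i
    rw [nhds_induced] at h1
    exact Filter.mem_comap.1 h1
  choose s hs hsub using hcom
  have hfin : ∀ i, ∃ A : Set ℤ, A.Finite ∧
      ∀ h : ℤ → ℤ, (∀ a ∈ A, h a = τ₀ i a) → h ∈ s i := by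
    intro i
    have h2 := hs i
    rw [nhds_pi, Filter.mem_pi] at h2
    obtain ⟨A, hA, u, hu, huss⟩ := h2
    refine ⟨A, hA, fun h hh => huss ?_⟩
    intro a ha
    have hpure := hu a
    rw [nhds_discrete, Filter.mem_pure] at hpure
    rw [hh a ha]
    exact hpure
  choose A hAfin hAsub using hfin
  set F : Finset (Fin n × ℤ) :=
    Finset.univ.biUnion (fun i => (hAfin i).toFinset.image (fun a => (i, a))) with hF
  obtain ⟨τ, hτ1, hτ2⟩ := key v hv τ₀ F
  refine ⟨τ, ?_, hτ1⟩
  apply htU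
  intro i _
  apply hsub i
  apply hAsub i
  intro a ha
  apply hτ2 (i, a)
  rw [hF]
  apply Finset.mem_biUnion.2
  exact ⟨i, Finset.mem_univ i, Finset.mem_image.2 ⟨a, (hAfin i).mem_toFinset.2 ha, rfl⟩⟩

end Stmt7Aux

/-- for every nontrivial reduced word `v` on `n + 1` letters, the set of tuples
`(τ₁, …, τₙ)` with `v(σ, τ₁, …, τₙ)  ≠ 1` is open and dense. -/
theorem stmt_7 (n : ℕ) (hn : 1 ≤ n) (v : FreeGroup (Fin (n + 1))) (hv : v ≠ 1) :
    IsOpen {τ : Fin n → Equiv.Perm ℤ | evalWord τ v ≠ 1} ∧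
      Dense {τ : Fin n → Equiv.Perm ℤ | evalWord τ v ≠ 1} :=
  ⟨Stmt7Aux.isOpen_ne_one v, Stmt7Aux.dense_ne_one v hv⟩
end
end

section
/- Let σ be the shift permutation of ℤ and fix n ≥ 1. The set of tuples (τ₁,…,τₙ) ∈ Sym(ℤ)ⁿ such that σ,τ₁,…,τₙ freely generate a free subgroup of Sym(ℤ) of rank n+1 is residual (a countable intersection of dense open sets) in Sym(ℤ)ⁿ. -/
noncomputable section

-- topology equality
lemma topo_eq (n : ℕ) : (Pi.topologicalSpace : TopologicalSpace (Fin n → Equiv.Perm ℤ)) =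
    TopologicalSpace.induced (fun (τ : Fin n → Equiv.Perm ℤ) (j : Fin n) => ((τ j : ℤ → ℤ))) Pi.topologicalSpace := by
  simp only [Pi.topologicalSpace, permTop, induced_iInf, induced_compose]
  rfl

lemma nbhd_basic {n : ℕ} (U : Set (Fin n → Equiv.Perm ℤ)) (hU : IsOpen U)
    (τ : Fin n → Equiv.Perm ℤ) (hτ : τ ∈ U) :
    ∃ A : Finset ℤ, ∀ τ' : Fin n → Equiv.Perm ℤ, (∀ j, ∀ x ∈ A, τ' j x = τ j x) → τ' ∈ U := by
  rw [show (Pi.topologicalSpace : TopologicalSpace (Fin n → Equiv.Perm ℤ)) = _ from topo_eq n,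
    isOpen_induced_iff] at hU
  obtain ⟨V, hV, rfl⟩ := hU
  obtain ⟨I, u, hu, hpi⟩ := isOpen_pi_iff.1 hV _ hτ
  have h2 : ∀ j : Fin n, ∃ A : Finset ℤ, j ∈ I → {f : ℤ → ℤ | ∀ x ∈ A, f x = τ j x} ⊆ u j := by
    intro j
    by_cases hj : j ∈ I
    · obtain ⟨B, v, hv, hpj⟩ := isOpen_pi_iff.1 (hu j hj).1 _ (hu j hj).2
      refine ⟨B, fun _ => subset_trans (fun f hf => ?_) hpj⟩
      intro x hx
      have := hf x hx
      rw [this]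
      exact (hv x hx).2
    · exact ⟨∅, fun h => absurd h hj⟩
  choose A hA using h2
  refine ⟨I.biUnion A, fun τ' hτ' => ?_⟩
  refine hpi fun j hj => ?_
  exact hA j hj (fun x hx => hτ' j x (Finset.mem_biUnion.2 ⟨j, hj, hx⟩))

lemma cont_apply {n : ℕ} (j : Fin n) (a : ℤ) :
    Continuous (fun τ : Fin n → Equiv.Perm ℤ => τ j a) := by
  have h1 : Continuous (fun τ : Fin n → Equiv.Perm ℤ => τ j) := continuous_apply j
  have h2 : Continuous (fun π : Equiv.Perm ℤ => (π : ℤ → ℤ)) := continuous_induced_dom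
  exact (continuous_apply a).comp (h2.comp h1)

lemma isOpen_eval_eq {n : ℕ} (w : FreeGroup (Fin (n+1))) :
    ∀ a c : ℤ, IsOpen {τ : Fin n → Equiv.Perm ℤ | evalWord τ w a = c} := by
  induction w using FreeGroup.induction_on with
  | C1 =>
    intro a c
    by_cases h : a = c
    · simp only [map_one]; simp [h]
    · convert isOpen_empty
      ext τ; simp only [map_one]; simpa using h
  | of i =>
    intro a c
    show IsOpen {τ : Fin n → Equiv.Perm ℤ | evalWord τ (FreeGroup.of i) a = c}
    have : {τ : Fin n → Equiv.Perm ℤ | evalWord τ (FreeGroup.of i) a = c}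
        = {τ | (Fin.cons shift τ : Fin (n+1) → Equiv.Perm ℤ) i a = c} := by
      ext τ; simp [evalWord, FreeGroup.lift_apply_of]
    rw [this]
    induction i using Fin.cases with
    | zero =>
      simp only [Fin.cons_zero]
      by_cases h : shift a = c
      · simp [h]
      · convert isOpen_empty; ext τ; simpa using h
    | succ j =>
      simp only [Fin.cons_succ]
      exact (isOpen_discrete {c}).preimage (cont_apply j a)
  | inv_of i ih =>
    intro a c
    replace ih : ∀ a c : ℤ, IsOpen {τ : Fin n → Equiv.Perm ℤ | evalWord τ (FreeGroup.of i) a = c} := ih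
    show IsOpen {τ : Fin n → Equiv.Perm ℤ | evalWord τ (FreeGroup.of i)⁻¹ a = c}
    have : {τ : Fin n → Equiv.Perm ℤ | evalWord τ (FreeGroup.of i)⁻¹ a = c}
        = {τ | evalWord τ (FreeGroup.of i) c = a} := by
      ext τ; simp only [map_inv, Set.mem_setOf_eq]
      exact ⟨fun h => by rw [← h]; simp, fun h => by rw [← h]; simp⟩
    rw [this]; exact ih c a
  | mul x y ihx ihy =>
    intro a c
    have : {τ : Fin n → Equiv.Perm ℤ | evalWord τ (x * y) a = c}
        = ⋃ m : ℤ, {τ | evalWord τ y a = m} ∩ {τ | evalWord τ x m = c} := by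
      ext τ
      simp only [map_mul, Equiv.Perm.mul_apply, Set.mem_setOf_eq, Set.mem_iUnion,
        Set.mem_inter_iff]
      exact ⟨fun h => ⟨evalWord τ y a, rfl, h⟩, fun ⟨m, h1, h2⟩ => by rw [h1]; exact h2⟩
    rw [this]
    exact isOpen_iUnion fun m => (ihy a m).inter (ihx m c)

lemma isOpen_ne_one {n : ℕ} (w : FreeGroup (Fin (n+1))) :
    IsOpen {τ : Fin n → Equiv.Perm ℤ | evalWord τ w ≠ 1} := by
  have : {τ : Fin n → Equiv.Perm ℤ | evalWord τ w ≠ 1}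
      = ⋃ a : ℤ, ⋃ c : ℤ, ⋃ _ : c ≠ a, {τ | evalWord τ w a = c} := by
    ext τ
    simp only [Set.mem_setOf_eq, Set.mem_iUnion]
    constructor
    · intro h
      obtain ⟨a, ha⟩ : ∃ a, evalWord τ w a ≠ a := by
        by_contra hc
        push_neg at hc
        exact h (Equiv.ext fun a => by simpa using hc a)
      exact ⟨a, evalWord τ w a, ha, rfl⟩
    · rintro ⟨a, c, hca, h⟩ h1
      rw [h1] at h
      exact hca (by simpa using h.symm)
  rw [this]
  exact isOpen_iUnion fun a => isOpen_iUnion fun c => isOpen_iUnion fun _ => isOpen_eval_eq w a c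

theorem Equiv.Perm.apply_inv_self {α : Type*} (f : Equiv.Perm α) (x : α) : f (f⁻¹ x) = x :=
  Equiv.apply_symm_apply f x

theorem Equiv.Perm.inv_apply_self {α : Type*} (f : Equiv.Perm α) (x : α) : f⁻¹ (f x) = x :=
  Equiv.symm_apply_apply f x

namespace Stmt8
variable {n : ℕ}

/-- The permutation associated to a single letter. -/
def letterPerm (π : Fin n → Equiv.Perm ℤ) (ℓ : Fin (n+1) × Bool) : Equiv.Perm ℤ :=
  cond ℓ.2 ((Fin.cons shift π : Fin (n+1) → Equiv.Perm ℤ) ℓ.1) (((Fin.cons shift π : Fin (n+1) → Equiv.Perm ℤ) ℓ.1)⁻¹)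

lemma eval_mk_singleton (π : Fin n → Equiv.Perm ℤ) (ℓ : Fin (n+1) × Bool) :
    evalWord π (FreeGroup.mk [ℓ]) = letterPerm π ℓ := by
  show FreeGroup.lift _ _ = _
  rw [FreeGroup.lift_mk]
  simp [letterPerm]

lemma eval_snoc (π : Fin n → Equiv.Perm ℤ) (X : List (Fin (n+1) × Bool)) (ℓ : Fin (n+1) × Bool)
    (a : ℤ) : evalWord π (FreeGroup.mk (X ++ [ℓ])) a
      = evalWord π (FreeGroup.mk X) (letterPerm π ℓ a) := by
  rw [← FreeGroup.mul_mk, map_mul, Equiv.Perm.mul_apply, eval_mk_singleton]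

lemma shift_apply (a : ℤ) : shift a = a + 1 := rfl
lemma shift_inv_apply (a : ℤ) : shift⁻¹ a = a - 1 := by
  simp [shift, Equiv.Perm.inv_def]
  ring

def sgn (s : Bool) : ℤ := cond s 1 (-1)

def sigmaSum (R : List (Fin (n+1) × Bool)) : ℤ := (R.map fun ℓ => sgn ℓ.2).sum

def PureS (R : List (Fin (n+1) × Bool)) : Prop := ∀ ℓ ∈ R, ℓ.1 = 0

def Cond2 (x y : Fin (n+1) × Bool) : Prop := x.1 = y.1 → x.2 = !y.2 → False

def Compat (pa : Option (Fin n × Bool)) (h : Option (Fin (n+1) × Bool)) : Prop :=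
  ∀ (j : Fin n) (s : Bool), pa = some (j, s) →
    ∀ ℓ, h = some ℓ → ℓ.1 = Fin.succ j → ℓ.2 = !s → False

lemma sigmaSum_bound (R : List (Fin (n+1) × Bool)) :
    -(R.length : ℤ) ≤ sigmaSum R ∧ sigmaSum R ≤ R.length := by
  induction R with
  | nil => simp [sigmaSum]
  | cons x R ih =>
    have : sigmaSum (x :: R) = sgn x.2 + sigmaSum R := by simp [sigmaSum]
    rw [this]
    cases x.2 <;> simp [sgn, List.length_cons] <;> omega

lemma exists_fresh (F : Finset ℤ) (r : ℤ) : ∃ c : ℤ, ∀ x ∈ F, x + r < c := by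
  refine ⟨(insert (0:ℤ) F).max' ⟨0, Finset.mem_insert_self _ _⟩ + r + 1, fun x hx => ?_⟩
  have := Finset.le_max' (insert (0:ℤ) F) x (Finset.mem_insert_of_mem hx)
  omega

end Stmt8

namespace Stmt8
variable {n : ℕ}

lemma letterPerm_zero (π : Fin n → Equiv.Perm ℤ) (s : Bool) (a : ℤ) :
    letterPerm π ((0 : Fin (n+1)), s) a = a + sgn s := by
  cases s <;> simp [letterPerm, sgn, shift_apply, shift_inv_apply] <;> ring

lemma letterPerm_succ_true (π : Fin n → Equiv.Perm ℤ) (j : Fin n) (a : ℤ) :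
    letterPerm π (Fin.succ j, true) a = π j a := by
  simp [letterPerm]

lemma letterPerm_succ_false (π : Fin n → Equiv.Perm ℤ) (j : Fin n) (a : ℤ) :
    letterPerm π (Fin.succ j, false) a = (π j)⁻¹ a := by
  simp [letterPerm]

theorem key (R : List (Fin (n+1) × Bool)) :
    ∀ (π : Fin n → Equiv.Perm ℤ) (a e : ℤ) (pa : Option (Fin n × Bool))
      (I O : Fin n → Finset ℤ) (P G : Finset ℤ),
      R.Chain' Cond2 →
      (∀ j, I j ⊆ P) → (∀ j, O j ⊆ P) →
      (∀ j, ∀ x ∈ I j, π j x ∈ O j) →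
      (∀ x ∈ P, x = e ∨ x < a - R.length ∨ a + R.length < x) →
      (∀ j, e ∈ I j → pa = some (j, false)) →
      (∀ j, e ∈ O j → pa = some (j, true)) →
      ((a = e ∧ Compat pa R.head?) ∨
        (a ≠ e ∧ ∀ s : Bool, R.head? = some ((0 : Fin (n+1)), s) →
          (s = true → e < a) ∧ (s = false → a < e))) →
      ∃ (π' : Fin n → Equiv.Perm ℤ) (b : ℤ),
        (∀ j, ∀ x ∈ I j, π' j x = π j x) ∧
        evalWord π' (FreeGroup.mk R.reverse) a = b ∧
        (PureS R → b = a + sigmaSum R) ∧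
        (¬ PureS R → b ∉ P ∧ b ∉ G) := by
  induction R with
  | nil =>
    intro π a e pa I O P G _ _ _ _ _ _ _ _
    refine ⟨π, a, fun j x _ => rfl, ?_, ?_, ?_⟩
    · show evalWord π (FreeGroup.mk []) a = a
      have : FreeGroup.mk ([] : List (Fin (n+1) × Bool)) = 1 := rfl
      rw [this, map_one, Equiv.Perm.one_apply]
    · intro _; simp [sigmaSum]
    · intro h; exact absurd (fun ℓ hℓ => absurd hℓ List.not_mem_nil) h
  | cons ℓ R' ih =>
    intro π a e pa I O P G hR hIP hOP hIO hwin hbI hbO hJ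
    obtain ⟨hhead, hR'⟩ := List.isChain_cons.1 hR
    obtain ⟨i, s⟩ := ℓ
    rcases Fin.eq_zero_or_eq_succ i with hi | ⟨j, hi⟩
    · -- σ-letter
      subst hi
      set a' := a + sgn s with ha'
      have hsgn : sgn s = 1 ∨ sgn s = -1 := by cases s <;> simp [sgn]
      have hsign : ∀ s' : Bool, R'.head? = some ((0 : Fin (n+1)), s') → s' = s := by
        intro s' hh
        have h2 := hhead _ hh
        cases s <;> cases s' <;> first | rfl | exact (h2 rfl rfl).elim
      have hwin' : ∀ x ∈ P, x = e ∨ x < a' - R'.length ∨ a' + R'.length < x := by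
        intro x hx
        rcases hwin x hx with h | h | h
        · exact Or.inl h
        · right; left; simp only [List.length_cons] at h; push_cast at h ⊢; omega
        · right; right; simp only [List.length_cons] at h; push_cast at h ⊢; omega
      have hlink : (s = true → sgn s = 1) ∧ (s = false → sgn s = -1) := by
        cases s <;> simp [sgn]
      have hlink2 : (sgn s = 1 → s = true) ∧ (sgn s = -1 → s = false) := by
        cases s <;> simp [sgn]
      have hJ' : (a' = e ∧ Compat pa R'.head?) ∨
          (a' ≠ e ∧ ∀ s' : Bool, R'.head? = some ((0 : Fin (n+1)), s') →
            (s' = true → e < a') ∧ (s' = false → a' < e)) := by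
        rcases hJ with ⟨hae, -⟩ | ⟨hane, hdir⟩
        · subst hae
          right
          refine ⟨by rcases hsgn with h | h <;> omega, fun s' hh => ?_⟩
          obtain rfl := hsign s' hh
          exact ⟨fun hs => by have := hlink.1 hs; omega,
                 fun hs => by have := hlink.2 hs; omega⟩
        · have hd := hdir s rfl
          right
          refine ⟨?_, fun s' hh => ?_⟩
          · rcases hsgn with h | h
            · have := hd.1 (hlink2.1 h); omega
            · have := hd.2 (hlink2.2 h); omega
          · obtain rfl := hsign s' hh
            exact ⟨fun hs => by have := hd.1 hs; have := hlink.1 hs; omega,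
                   fun hs => by have := hd.2 hs; have := hlink.2 hs; omega⟩
      obtain ⟨π', b, hagree, heval, hpure, hnp⟩ :=
        ih π a' e pa I O P G hR' hIP hOP hIO hwin' hbI hbO hJ'
      refine ⟨π', b, hagree, ?_, ?_, ?_⟩
      · rw [List.reverse_cons, eval_snoc, letterPerm_zero]
        rw [ha'] at heval; exact heval
      · intro hp
        have hp' : PureS R' := fun x hx => hp x (List.mem_cons_of_mem _ hx)
        rw [hpure hp']
        have h5 : sigmaSum (((0 : Fin (n+1)), s) :: R') = sgn s + sigmaSum R' := by
          simp [sigmaSum]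
        rw [h5, ha']; ring
      · intro hp
        refine hnp fun h => hp fun x hx => ?_
        rcases List.mem_cons.1 hx with h1 | h1
        · rw [h1]
        · exact h x h1
    · -- τ-letter
      subst hi
      obtain ⟨c, hc⟩ := exists_fresh (P ∪ insert a G) (R'.length)
      have hcP : ∀ x ∈ P, x + (R'.length : ℤ) < c := fun x hx =>
        hc x (Finset.mem_union_left _ hx)
      have hcaG : a + (R'.length : ℤ) < c := hc a (Finset.mem_union_right _ (Finset.mem_insert_self _ _))
      have hcG : ∀ x ∈ G, x + (R'.length : ℤ) < c := fun x hx =>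
        hc x (Finset.mem_union_right _ (Finset.mem_insert_of_mem hx))
      have hlen0 : (0:ℤ) ≤ (R'.length : ℤ) := Int.natCast_nonneg _
      have hcnotP : c ∉ P := fun h => by have := hcP c h; omega
      have hcnea : c ≠ a := fun h => by omega
      have hbd := sigmaSum_bound R'
      have hae_or : ∀ (S : Fin n → Finset ℤ), (∀ j', S j' ⊆ P) → a ∈ S j → a = e := by
        intro S hSP hmem
        rcases hwin a (hSP j hmem) with h | h | h
        · exact h
        · simp only [List.length_cons] at h; push_cast at h; omega
        · simp only [List.length_cons] at h; push_cast at h; omega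
      cases s
      · -- inverse letter τ_j⁻¹
        have haO : a ∉ O j := by
          intro hmem
          have hae : a = e := hae_or O hOP hmem
          rcases hJ with ⟨-, hcomp⟩ | ⟨hne, -⟩
          · exact hcomp j true (hbO j (hae ▸ hmem)) (Fin.succ j, false) rfl rfl rfl
          · exact hne hae
        have huI : (π j)⁻¹ a ∉ I j := by
          intro h
          have h2 := hIO j _ h
          rw [Equiv.Perm.apply_inv_self] at h2
          exact haO h2
        have hcI : c ∉ I j := fun h => hcnotP (hIP j h)
        set π' := Function.update π j (π j * Equiv.swap c ((π j)⁻¹ a)) with hπ'def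
        have hπ'j : ∀ x, π' j x = π j (Equiv.swap c ((π j)⁻¹ a) x) := by
          intro x; rw [hπ'def, Function.update_self, Equiv.Perm.mul_apply]
        have hπ'o : ∀ j', j' ≠ j → π' j' = π j' := fun j' h => Function.update_of_ne h _ _
        have hagree0 : ∀ j', ∀ x ∈ I j', π' j' x = π j' x := by
          intro j' x hx
          rcases eq_or_ne j j' with rfl | h
          · have hsw : Equiv.swap c ((π j)⁻¹ a) x = x :=
              Equiv.swap_apply_of_ne_of_ne (by rintro rfl; exact hcI hx)
                (by rintro rfl; exact huI hx)
            rw [hπ'j, hsw]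
          · rw [hπ'o j' (Ne.symm h)]
        have hπ'c : π' j c = a := by
          rw [hπ'j, Equiv.swap_apply_left, Equiv.Perm.apply_inv_self]
        set I' := Function.update I j (insert c (I j)) with hI'def
        set O' := Function.update O j (insert a (O j)) with hO'def
        set P' := insert a (insert c P) with hP'def
        have hIsub : ∀ j', I j' ⊆ I' j' := by
          intro j'
          rcases eq_or_ne j j' with rfl | h
          · rw [hI'def, Function.update_self]; exact Finset.subset_insert _ _
          · rw [hI'def, Function.update_of_ne (Ne.symm h)]
        have hPsub : P ⊆ P' := fun x hx =>
          Finset.mem_insert_of_mem (Finset.mem_insert_of_mem hx)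
        have hIP' : ∀ j', I' j' ⊆ P' := by
          intro j'
          rcases eq_or_ne j j' with rfl | h
          · rw [hI'def, Function.update_self]
            intro x hx
            rcases Finset.mem_insert.1 hx with h1 | h1
            · exact h1 ▸ Finset.mem_insert_of_mem (Finset.mem_insert_self _ _)
            · exact hPsub (hIP j h1)
          · rw [hI'def, Function.update_of_ne (Ne.symm h)]; exact (hIP j').trans hPsub
        have hOP' : ∀ j', O' j' ⊆ P' := by
          intro j'
          rcases eq_or_ne j j' with rfl | h
          · rw [hO'def, Function.update_self]
            intro x hx
            rcases Finset.mem_insert.1 hx with h1 | h1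
            · exact h1 ▸ Finset.mem_insert_self _ _
            · exact hPsub (hOP j h1)
          · rw [hO'def, Function.update_of_ne (Ne.symm h)]; exact (hOP j').trans hPsub
        have hIO' : ∀ j', ∀ x ∈ I' j', π' j' x ∈ O' j' := by
          intro j' x hx
          rcases eq_or_ne j j' with rfl | h
          · rw [hI'def, Function.update_self] at hx
            rw [hO'def, Function.update_self]
            rcases Finset.mem_insert.1 hx with h1 | h1
            · subst h1; rw [hπ'c]; exact Finset.mem_insert_self _ _
            · rw [hagree0 j x h1]; exact Finset.mem_insert_of_mem (hIO j x h1)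
          · rw [hπ'o j' (Ne.symm h), hI'def, Function.update_of_ne (Ne.symm h)] at *
            rw [hO'def, Function.update_of_ne (Ne.symm h)]
            exact hIO j' x hx
        have hwin'' : ∀ x ∈ P', x = c ∨ x < c - R'.length ∨ c + R'.length < x := by
          intro x hx
          rcases Finset.mem_insert.1 hx with h1 | h1
          · subst h1; right; left; omega
          rcases Finset.mem_insert.1 h1 with h2 | h2
          · exact Or.inl h2
          · have := hcP x h2; right; left; omega
        have hbI'' : ∀ j', c ∈ I' j' → (some (j, false) : Option (Fin n × Bool)) = some (j', false) := by
          intro j' hx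
          rcases eq_or_ne j j' with rfl | h
          · rfl
          · rw [hI'def, Function.update_of_ne (Ne.symm h)] at hx
            exact absurd (hIP j' hx) hcnotP
        have hbO'' : ∀ j', c ∈ O' j' → (some (j, false) : Option (Fin n × Bool)) = some (j', true) := by
          intro j' hx
          rcases eq_or_ne j j' with rfl | h
          · rw [hO'def, Function.update_self] at hx
            rcases Finset.mem_insert.1 hx with h1 | h1
            · exact absurd h1 hcnea
            · exact absurd (hOP j h1) hcnotP
          · rw [hO'def, Function.update_of_ne (Ne.symm h)] at hx
            exact absurd (hOP j' hx) hcnotP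
        have hJ'' : (c = c ∧ Compat (some (j, false)) R'.head?) ∨
            (c ≠ c ∧ ∀ s' : Bool, R'.head? = some ((0 : Fin (n+1)), s') →
              (s' = true → c < c) ∧ (s' = false → c < c)) := Or.inl ⟨rfl, by
          intro j₂ s₂ hpa ℓ₂ hh h1 h2
          obtain ⟨hj2, hs2⟩ : j = j₂ ∧ false = s₂ := by
            have := Option.some.inj hpa
            exact ⟨congrArg Prod.fst this, congrArg Prod.snd this⟩
          subst hj2; subst hs2
          exact hhead ℓ₂ hh h1.symm (by simp [h2]) ⟩
        obtain ⟨π'', b, hagree2, heval2, hpure2, hnp2⟩ :=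
          ih π' c c (some (j, false)) I' O' P' G hR' hIP' hOP' hIO' hwin'' hbI'' hbO'' hJ''
        have hcmem : c ∈ I' j := by
          rw [hI'def, Function.update_self]; exact Finset.mem_insert_self _ _
        refine ⟨π'', b, ?_, ?_, ?_, ?_⟩
        · intro j' x hx
          rw [hagree2 j' x (hIsub j' hx), hagree0 j' x hx]
        · rw [List.reverse_cons, eval_snoc, letterPerm_succ_false]
          have h4 : π'' j c = a := by rw [hagree2 j c hcmem]; exact hπ'c
          have h5 : (π'' j)⁻¹ a = c := by rw [← h4, Equiv.Perm.inv_apply_self]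
          rw [h5]; exact heval2
        · intro hp
          exact absurd (hp (Fin.succ j, false) (List.mem_cons_self)) (Fin.succ_ne_zero j)
        · intro _
          by_cases hps : PureS R'
          · have hb := hpure2 hps
            constructor
            · intro hbP; have := hcP b hbP; omega
            · intro hbG; have := hcG b hbG; omega
          · have h6 := hnp2 hps
            exact ⟨fun h => h6.1 (hPsub h), h6.2⟩
      · -- direct letter τ_j
        have haI : a ∉ I j := by
          intro hmem
          have hae : a = e := hae_or I hIP hmem
          rcases hJ with ⟨-, hcomp⟩ | ⟨hne, -⟩
          · exact hcomp j false (hbI j (hae ▸ hmem)) (Fin.succ j, true) rfl rfl rfl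
          · exact hne hae
        have hvI : (π j)⁻¹ c ∉ I j := by
          intro h
          have h2 := hIO j _ h
          rw [Equiv.Perm.apply_inv_self] at h2
          exact hcnotP (hOP j h2)
        set π' := Function.update π j (π j * Equiv.swap a ((π j)⁻¹ c)) with hπ'def
        have hπ'j : ∀ x, π' j x = π j (Equiv.swap a ((π j)⁻¹ c) x) := by
          intro x; rw [hπ'def, Function.update_self, Equiv.Perm.mul_apply]
        have hπ'o : ∀ j', j' ≠ j → π' j' = π j' := fun j' h => Function.update_of_ne h _ _
        have hagree0 : ∀ j', ∀ x ∈ I j', π' j' x = π j' x := by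
          intro j' x hx
          rcases eq_or_ne j j' with rfl | h
          · have hsw : Equiv.swap a ((π j)⁻¹ c) x = x :=
              Equiv.swap_apply_of_ne_of_ne (by rintro rfl; exact haI hx)
                (by rintro rfl; exact hvI hx)
            rw [hπ'j, hsw]
          · rw [hπ'o j' (Ne.symm h)]
        have hπ'a : π' j a = c := by
          rw [hπ'j, Equiv.swap_apply_left, Equiv.Perm.apply_inv_self]
        set I' := Function.update I j (insert a (I j)) with hI'def
        set O' := Function.update O j (insert c (O j)) with hO'def
        set P' := insert a (insert c P) with hP'def
        have hIsub : ∀ j', I j' ⊆ I' j' := by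
          intro j'
          rcases eq_or_ne j j' with rfl | h
          · rw [hI'def, Function.update_self]; exact Finset.subset_insert _ _
          · rw [hI'def, Function.update_of_ne (Ne.symm h)]
        have hPsub : P ⊆ P' := fun x hx =>
          Finset.mem_insert_of_mem (Finset.mem_insert_of_mem hx)
        have hIP' : ∀ j', I' j' ⊆ P' := by
          intro j'
          rcases eq_or_ne j j' with rfl | h
          · rw [hI'def, Function.update_self]
            intro x hx
            rcases Finset.mem_insert.1 hx with h1 | h1
            · exact h1 ▸ Finset.mem_insert_self _ _
            · exact hPsub (hIP j h1)
          · rw [hI'def, Function.update_of_ne (Ne.symm h)]; exact (hIP j').trans hPsub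
        have hOP' : ∀ j', O' j' ⊆ P' := by
          intro j'
          rcases eq_or_ne j j' with rfl | h
          · rw [hO'def, Function.update_self]
            intro x hx
            rcases Finset.mem_insert.1 hx with h1 | h1
            · exact h1 ▸ Finset.mem_insert_of_mem (Finset.mem_insert_self _ _)
            · exact hPsub (hOP j h1)
          · rw [hO'def, Function.update_of_ne (Ne.symm h)]; exact (hOP j').trans hPsub
        have hIO' : ∀ j', ∀ x ∈ I' j', π' j' x ∈ O' j' := by
          intro j' x hx
          rcases eq_or_ne j j' with rfl | h
          · rw [hI'def, Function.update_self] at hx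
            rw [hO'def, Function.update_self]
            rcases Finset.mem_insert.1 hx with h1 | h1
            · subst h1; rw [hπ'a]; exact Finset.mem_insert_self _ _
            · rw [hagree0 j x h1]; exact Finset.mem_insert_of_mem (hIO j x h1)
          · rw [hπ'o j' (Ne.symm h), hI'def, Function.update_of_ne (Ne.symm h)] at *
            rw [hO'def, Function.update_of_ne (Ne.symm h)]
            exact hIO j' x hx
        have hwin'' : ∀ x ∈ P', x = c ∨ x < c - R'.length ∨ c + R'.length < x := by
          intro x hx
          rcases Finset.mem_insert.1 hx with h1 | h1
          · subst h1; right; left; omega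
          rcases Finset.mem_insert.1 h1 with h2 | h2
          · exact Or.inl h2
          · have := hcP x h2; right; left; omega
        have hbI'' : ∀ j', c ∈ I' j' → (some (j, true) : Option (Fin n × Bool)) = some (j', false) := by
          intro j' hx
          rcases eq_or_ne j j' with rfl | h
          · rw [hI'def, Function.update_self] at hx
            rcases Finset.mem_insert.1 hx with h1 | h1
            · exact absurd h1 hcnea
            · exact absurd (hIP j h1) hcnotP
          · rw [hI'def, Function.update_of_ne (Ne.symm h)] at hx
            exact absurd (hIP j' hx) hcnotP
        have hbO'' : ∀ j', c ∈ O' j' → (some (j, true) : Option (Fin n × Bool)) = some (j', true) := by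
          intro j' hx
          rcases eq_or_ne j j' with rfl | h
          · rfl
          · rw [hO'def, Function.update_of_ne (Ne.symm h)] at hx
            exact absurd (hOP j' hx) hcnotP
        have hJ'' : (c = c ∧ Compat (some (j, true)) R'.head?) ∨
            (c ≠ c ∧ ∀ s' : Bool, R'.head? = some ((0 : Fin (n+1)), s') →
              (s' = true → c < c) ∧ (s' = false → c < c)) := Or.inl ⟨rfl, by
          intro j₂ s₂ hpa ℓ₂ hh h1 h2
          obtain ⟨hj2, hs2⟩ : j = j₂ ∧ true = s₂ := by
            have := Option.some.inj hpa
            exact ⟨congrArg Prod.fst this, congrArg Prod.snd this⟩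
          subst hj2; subst hs2
          exact hhead ℓ₂ hh h1.symm (by simp [h2]) ⟩
        obtain ⟨π'', b, hagree2, heval2, hpure2, hnp2⟩ :=
          ih π' c c (some (j, true)) I' O' P' G hR' hIP' hOP' hIO' hwin'' hbI'' hbO'' hJ''
        have hamem : a ∈ I' j := by
          rw [hI'def, Function.update_self]; exact Finset.mem_insert_self _ _
        refine ⟨π'', b, ?_, ?_, ?_, ?_⟩
        · intro j' x hx
          rw [hagree2 j' x (hIsub j' hx), hagree0 j' x hx]
        · rw [List.reverse_cons, eval_snoc, letterPerm_succ_true]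
          have h4 : π'' j a = c := by rw [hagree2 j a hamem]; exact hπ'a
          rw [h4]; exact heval2
        · intro hp
          exact absurd (hp (Fin.succ j, true) (List.mem_cons_self)) (Fin.succ_ne_zero j)
        · intro _
          by_cases hps : PureS R'
          · have hb := hpure2 hps
            constructor
            · intro hbP; have := hcP b hbP; omega
            · intro hbG; have := hcG b hbG; omega
          · have h6 := hnp2 hps
            exact ⟨fun h => h6.1 (hPsub h), h6.2⟩

end Stmt8

namespace Stmt8
variable {n : ℕ}

lemma cond2_symm {x y : Fin (n+1) × Bool} (h : Cond2 x y) : Cond2 y x := by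
  intro h1 h2
  exact h h1.symm (by rw [h2, Bool.not_not])

lemma chain'_of_noRed : ∀ L : List (Fin (n+1) × Bool),
    (∀ (L₁ L₂ : List (Fin (n+1) × Bool)) (x : Fin (n+1)) (b : Bool),
      L ≠ L₁ ++ (x, b) :: (x, !b) :: L₂) → L.Chain' Cond2 := by
  intro L
  induction L with
  | nil => intro _; exact List.isChain_nil
  | cons x L ih =>
    intro h
    cases L with
    | nil => exact List.isChain_singleton x
    | cons y L' =>
      rw [List.Chain', List.isChain_cons_cons]
      constructor
      · intro h1 h2
        refine h [] L' x.1 x.2 ?_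
        have hy : y = (x.1, !x.2) := by
          refine Prod.ext h1.symm ?_
          rw [h2, Bool.not_not]
        rw [List.nil_append]
        rw [← hy]
      · refine ih fun L₁ L₂ x' b' hEq => h (x :: L₁) L₂ x' b' ?_
        rw [List.cons_append, hEq]

lemma chain'_toWord (w : FreeGroup (Fin (n+1))) : w.toWord.Chain' Cond2 := by
  refine chain'_of_noRed _ fun L₁ L₂ x b hEq => ?_
  exact FreeGroup.reduce.not ((FreeGroup.reduce_toWord w).trans hEq)

lemma sigma_eq (R : List (Fin (n+1) × Bool)) : ∀ x, (x :: R).Chain' Cond2 → PureS (x :: R) →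
    sigmaSum (x :: R) = sgn x.2 * (R.length + 1) := by
  induction R with
  | nil => intro x _ _; simp [sigmaSum]
  | cons y R ih =>
    intro x hch hp
    obtain ⟨hxy, hch'⟩ := List.isChain_cons_cons.1 hch
    have hx0 : x.1 = 0 := hp x (List.mem_cons_self)
    have hy0 : y.1 = 0 := hp y (List.mem_cons_of_mem _ (List.mem_cons_self))
    have hsame : x.2 = y.2 := by
      by_contra hne
      exact hxy (hx0.trans hy0.symm) (Bool.eq_not_iff.2 hne)
    have hp' : PureS (y :: R) := fun z hz => hp z (List.mem_cons_of_mem _ hz)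
    have h2 := ih y hch' hp'
    have h3 : sigmaSum (x :: y :: R) = sgn x.2 + sigmaSum (y :: R) := by simp [sigmaSum]
    rw [h3, h2, ← hsame]
    simp only [List.length_cons]
    push_cast
    ring

lemma pure_sigma_ne (R : List (Fin (n+1) × Bool)) (hch : R.Chain' Cond2) (hp : PureS R)
    (hne : R ≠ []) : sigmaSum R ≠ 0 := by
  obtain ⟨x, R', rfl⟩ := List.exists_cons_of_ne_nil hne
  rw [sigma_eq R' x hch hp]
  have : (0:ℤ) ≤ (R'.length : ℤ) := Int.natCast_nonneg _
  cases hx : x.2 <;> simp [sgn] <;> omega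

end Stmt8

namespace Stmt8
variable {n : ℕ}

open Finset in
lemma dense_ne_one (w : FreeGroup (Fin (n+1))) (hw : w ≠ 1) :
    Dense {τ : Fin n → Equiv.Perm ℤ | evalWord τ w ≠ 1} := by
  rw [dense_iff_inter_open]
  rintro U hU ⟨τ, hτ⟩
  obtain ⟨A, hA⟩ := nbhd_basic U hU τ hτ
  set R := w.toWord.reverse with hRdef
  have hchain : R.Chain' Cond2 := by
    rw [hRdef, List.Chain', List.isChain_reverse]
    exact (chain'_toWord w).imp fun a b h => cond2_symm h
  set P : Finset ℤ := A ∪ Finset.univ.biUnion (fun j : Fin n => A.image (τ j)) with hPdef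
  obtain ⟨a0, ha0⟩ := exists_fresh P R.length
  have hlen0 : (0:ℤ) ≤ (R.length : ℤ) := Int.natCast_nonneg _
  have ha0P : a0 ∉ P := fun h => by have := ha0 a0 h; omega
  obtain ⟨τ', b, hagree, heval, hpure, hnp⟩ :=
    key R τ a0 a0 none (fun _ => A) (fun j => A.image (τ j)) P {a0} hchain
      (fun j => Finset.subset_union_left)
      (fun j => fun x hx => Finset.mem_union_right _
        (Finset.mem_biUnion.2 ⟨j, Finset.mem_univ j, hx⟩))
      (fun j x hx => Finset.mem_image_of_mem _ hx)
      (fun x hx => Or.inr (Or.inl (by have := ha0 x hx; omega)))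
      (fun j h => absurd (Finset.mem_union_left _ h) ha0P)
      (fun j h => absurd (Finset.mem_union_right _
        (Finset.mem_biUnion.2 ⟨j, Finset.mem_univ j, h⟩)) ha0P)
      (Or.inl ⟨rfl, fun j s h => by simp at h⟩)
  have hR2 : FreeGroup.mk R.reverse = w := by
    rw [hRdef, List.reverse_reverse, FreeGroup.mk_toWord]
  rw [hR2] at heval
  have hbne : b ≠ a0 := by
    by_cases hps : PureS R
    · rw [hpure hps]
      have hRne : R ≠ [] := by
        rw [hRdef]
        simp only [ne_eq, List.reverse_eq_nil_iff, FreeGroup.toWord_eq_nil_iff]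
        exact hw
      have := pure_sigma_ne R hchain hps hRne
      omega
    · exact fun h => (hnp hps).2 (by rw [h]; exact Finset.mem_singleton_self a0)
  refine ⟨τ', hA τ' (fun j x hx => hagree j x hx), fun h1 => hbne ?_⟩
  rw [h1] at heval
  simpa using heval.symm

end Stmt8

open Stmt8

/-- the set of tuples `(τ₁, …, τₙ)` such that `σ, τ₁, …, τₙ` freely generate a
free subgroup of rank `n + 1` is residual. -/
theorem stmt_8 (n : ℕ) (hn : 1 ≤ n) :
    {τ : Fin n → Equiv.Perm ℤ | Function.Injective (evalWord τ)} ∈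
      residual (Fin n → Equiv.Perm ℤ) := by
  have hcount : Countable (FreeGroup (Fin (n+1))) := by
    have hsurj : Function.Surjective
        (FreeGroup.mk : List (Fin (n+1) × Bool) → FreeGroup (Fin (n+1))) :=
      fun w => ⟨w.toWord, FreeGroup.mk_toWord⟩
    exact hsurj.countable
  have h1 : (⋂ w : {w : FreeGroup (Fin (n+1)) // w ≠ 1},
      {τ : Fin n → Equiv.Perm ℤ | evalWord τ w.1 ≠ 1}) ∈ residual (Fin n → Equiv.Perm ℤ) := by
    rw [countable_iInter_mem]
    intro w
    exact residual_of_dense_open (isOpen_ne_one w.1) (dense_ne_one w.1 w.2)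
  refine Filter.mem_of_superset h1 ?_
  intro τ hτ
  simp only [Set.mem_iInter, Set.mem_setOf_eq] at hτ ⊢
  exact (injective_iff_map_eq_one (evalWord τ)).2 fun w hw =>
    by_contra fun hne => hτ ⟨w, hne⟩ hw
end
end

section
/- Let σ be the shift permutation of ℤ and fix n ≥ 1. The set of tuples (τ₁,…,τₙ) ∈ Sym(ℤ)ⁿ such that the subgroup generated by σ,τ₁,…,τₙ is dense in Sym(ℤ) is residual in Sym(ℤ)ⁿ. -/
noncomputable section

lemma shift_zpow (m x : ℤ) : (shift ^ m) x = x + m := by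
  show ((Equiv.addRight (1:ℤ)) ^ m) x = x + m
  induction m using Int.induction_on generalizing x with
  | zero => simp
  | succ k ih => rw [zpow_add_one, Equiv.Perm.mul_apply, ih]; simp [Equiv.addRight]; ring
  | pred k ih =>
    rw [zpow_sub_one, Equiv.Perm.mul_apply, ih]; simp [Equiv.addRight]; ring

lemma isOpen_fix (x y : ℤ) : IsOpen {π : Equiv.Perm ℤ | π x = y} := by
  have h : Continuous (fun π : Equiv.Perm ℤ => (π : ℤ → ℤ) x) :=
    (continuous_apply x).comp continuous_induced_dom
  exact h.isOpen_preimage {y} (isOpen_discrete _)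

-- nhds cylinder lemma for Perm ℤ
lemma perm_cyl {V : Set (Equiv.Perm ℤ)} (hV : IsOpen V) {π : Equiv.Perm ℤ} (hπ : π ∈ V) :
    ∃ F : Finset ℤ, ∀ g : Equiv.Perm ℤ, (∀ x ∈ F, g x = π x) → g ∈ V := by
  rw [isOpen_induced_iff] at hV
  obtain ⟨t, ht, rfl⟩ := hV
  obtain ⟨F, u, hu, hsub⟩ := isOpen_pi_iff.1 ht _ hπ
  refine ⟨F, fun g hg => hsub fun x hx => ?_⟩
  show (g : ℤ → ℤ) x ∈ u x
  rw [hg x hx]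
  exact (hu x hx).2

lemma pi_cyl {n : ℕ} {V : Set (Fin n → Equiv.Perm ℤ)} (hV : IsOpen V)
    {τ : Fin n → Equiv.Perm ℤ} (hτ : τ ∈ V) :
    ∃ F : Finset ℤ, ∀ τ' : Fin n → Equiv.Perm ℤ,
      (∀ j, ∀ x ∈ F, τ' j x = τ j x) → τ' ∈ V := by
  obtain ⟨I, u, hu, hsub⟩ := isOpen_pi_iff.1 hV _ hτ
  have key : ∀ j : Fin n, ∃ Fj : Finset ℤ,
      ∀ g : Equiv.Perm ℤ, (∀ x ∈ Fj, g x = τ j x) → (j ∈ I → g ∈ u j) := by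
    intro j
    by_cases hj : j ∈ I
    · obtain ⟨Fj, hFj⟩ := perm_cyl (hu j hj).1 (hu j hj).2
      exact ⟨Fj, fun g hg _ => hFj g hg⟩
    · exact ⟨∅, fun g _ hj' => absurd hj' hj⟩
  choose Fj hFj using key
  refine ⟨Finset.univ.biUnion Fj, fun τ' h => hsub fun j hj => ?_⟩
  exact hFj j (τ' j) (fun x hx => h j x (Finset.mem_biUnion.2 ⟨j, Finset.mem_univ _, hx⟩)) hj

lemma isOpen_evalWord {n : ℕ} (w : FreeGroup (Fin (n + 1))) :
    ∀ x y : ℤ, IsOpen {τ : Fin n → Equiv.Perm ℤ | evalWord τ w x = y} := by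
  induction w using FreeGroup.induction_on with
  | C1 =>
    intro x y
    simp only [map_one, Equiv.Perm.one_apply]
    by_cases h : x = y
    · simp [h]
    · convert isOpen_empty
      ext τ; simp [h]
  | of i =>
    intro x y
    have he : ∀ τ : Fin n → Equiv.Perm ℤ, evalWord τ (FreeGroup.of i) = Fin.cons (α := fun _ => Equiv.Perm ℤ) shift τ i :=
      fun τ => FreeGroup.lift_apply_of
    induction i using Fin.cases with
    | zero =>
      simp only [he, Fin.cons_zero]
      by_cases h : shift x = y
      · convert isOpen_univ; ext τ; simp [h]
      · convert isOpen_empty; ext τ; simp [h]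
    | succ j =>
      have : {τ : Fin n → Equiv.Perm ℤ | evalWord τ (FreeGroup.of j.succ) x = y}
          = (fun τ : Fin n → Equiv.Perm ℤ => τ j) ⁻¹' {π | π x = y} := by
        ext τ; simp [he, Fin.cons_succ]
      rw [this]
      exact (isOpen_fix x y).preimage (continuous_apply j)
  | inv_of i ih =>
    intro x y
    have : {τ : Fin n → Equiv.Perm ℤ | evalWord τ (FreeGroup.of i)⁻¹ x = y}
        = {τ : Fin n → Equiv.Perm ℤ | evalWord τ (FreeGroup.of i) y = x} := by
      ext τ
      simp only [map_inv, Set.mem_setOf_eq]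
      exact ⟨fun h => by rw [← h]; simp, fun h => by rw [← h]; simp⟩
    rw [this]; exact ih y x
  | mul u v ihu ihv =>
    intro x y
    have : {τ : Fin n → Equiv.Perm ℤ | evalWord τ (u * v) x = y}
        = ⋃ c : ℤ, {τ : Fin n → Equiv.Perm ℤ | evalWord τ v x = c}
            ∩ {τ : Fin n → Equiv.Perm ℤ | evalWord τ u c = y} := by
      ext τ
      simp only [map_mul, Equiv.Perm.mul_apply, Set.mem_iUnion, Set.mem_inter_iff,
        Set.mem_setOf_eq]
      exact ⟨fun h => ⟨evalWord τ v x, rfl, h⟩, fun ⟨c, hc, h⟩ => by rw [hc]; exact h⟩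
    rw [this]
    exact isOpen_iUnion fun c => (ihv x c).inter (ihu c y)
open Classical in
lemma exists_perm_extend {s : Set ℤ} (hs : s.Finite) {f : ℤ → ℤ} (hf : Set.InjOn f s) :
    ∃ π : Equiv.Perm ℤ, ∀ x ∈ s, π x = f x := by
  classical
  have hB : (f '' s).Finite := hs.image f
  haveI : Infinite ↥sᶜ := hs.infinite_compl.to_subtype
  haveI : Infinite ↥(f '' s)ᶜ := hB.infinite_compl.to_subtype
  obtain ⟨e2⟩ : Nonempty (↥sᶜ ≃ ↥(f '' s)ᶜ) := nonempty_equiv_of_countable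
  let e1 : ↥s ≃ ↥(f '' s) := Equiv.Set.imageOfInjOn f s hf
  refine ⟨(Equiv.Set.sumCompl s).symm.trans ((e1.sumCongr e2).trans (Equiv.Set.sumCompl (f '' s))),
    fun x hx => ?_⟩
  simp only [Equiv.trans_apply]
  rw [Equiv.Set.sumCompl_symm_apply_of_mem hx]
  rfl

def hitSet (n : ℕ) {k : ℕ} (a b : Fin k → ℤ) : Set (Fin n → Equiv.Perm ℤ) :=
  {τ | ∃ g ∈ Subgroup.closure (Set.range (Fin.cons shift τ)), ∀ i, g (a i) = b i}

lemma isOpen_hitSet {n k : ℕ} (a b : Fin k → ℤ) : IsOpen (hitSet n a b) := by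
  have hrw : hitSet n a b
      = ⋃ w : FreeGroup (Fin (n + 1)), ⋂ i, {τ | evalWord τ w (a i) = b i} := by
    ext τ
    simp only [hitSet, Set.mem_setOf_eq, Set.mem_iUnion, Set.mem_iInter]
    constructor
    · rintro ⟨g, hg, hgi⟩
      rw [← FreeGroup.range_lift_eq_closure] at hg
      obtain ⟨w, rfl⟩ := hg
      exact ⟨w, hgi⟩
    · rintro ⟨w, hw⟩
      exact ⟨evalWord τ w, by rw [← FreeGroup.range_lift_eq_closure]; exact ⟨w, rfl⟩, hw⟩
  rw [hrw]
  exact isOpen_iUnion fun w => isOpen_iInter_of_finite fun i => isOpen_evalWord w _ _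

lemma dense_hitSet {n k : ℕ} (hn : 1 ≤ n) {a b : Fin k → ℤ}
    (ha : Function.Injective a) (hb : Function.Injective b) :
    Dense (hitSet n a b) := by
  rw [dense_iff_inter_open]
  rintro V hV ⟨τ, hτ⟩
  obtain ⟨F, hF⟩ := pi_cyl hV hτ
  set j₀ : Fin n := ⟨0, hn⟩ with hj₀
  classical
  set Bad : Finset ℤ :=
    (Finset.univ.biUnion fun i : Fin k => F.image fun x => x - a i) ∪
    (Finset.univ.biUnion fun i : Fin k => (F.image (τ j₀)).image fun x => x - b i) with hBad
  obtain ⟨m, hm⟩ := Infinite.exists_notMem_finset Bad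
  have hC1 : ∀ i : Fin k, a i + m ∉ F := by
    intro i hmem
    apply hm
    refine Finset.mem_union_left _ (Finset.mem_biUnion.2 ⟨i, Finset.mem_univ _, ?_⟩)
    exact Finset.mem_image.2 ⟨a i + m, hmem, by ring⟩
  have hC2 : ∀ i : Fin k, ∀ x ∈ F, b i + m ≠ τ j₀ x := by
    intro i x hx heq
    apply hm
    refine Finset.mem_union_right _ (Finset.mem_biUnion.2 ⟨i, Finset.mem_univ _, ?_⟩)
    exact Finset.mem_image.2 ⟨τ j₀ x, Finset.mem_image.2 ⟨x, hx, rfl⟩, by rw [← heq]; ring⟩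
  set s : Set ℤ := ↑F ∪ Set.range (fun i : Fin k => a i + m) with hs_def
  have hs : s.Finite := (F.finite_toSet).union (Set.finite_range _)
  set f : ℤ → ℤ :=
    fun x => if h : ∃ i : Fin k, a i + m = x then b h.choose + m else τ j₀ x with hf_def
  have hfr : ∀ i : Fin k, f (a i + m) = b i + m := by
    intro i
    have h : ∃ i' : Fin k, a i' + m = a i + m := ⟨i, rfl⟩
    have hch : h.choose = i := ha (by have := h.choose_spec; omega)
    simp only [hf_def, dif_pos h, hch]
  have hfF : ∀ x ∈ F, f x = τ j₀ x := by
    intro x hx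
    have hne : ¬ ∃ i : Fin k, a i + m = x := by rintro ⟨i, rfl⟩; exact hC1 i hx
    simp only [hf_def, dif_neg hne]
  have hinj : Set.InjOn f s := by
    intro x hx y hy hxy
    by_cases hx' : ∃ i : Fin k, a i + m = x <;> by_cases hy' : ∃ i' : Fin k, a i' + m = y
    · obtain ⟨i, rfl⟩ := hx'; obtain ⟨i', rfl⟩ := hy'
      rw [hfr, hfr] at hxy
      have : i = i' := hb (by omega)
      rw [this]
    · obtain ⟨i, rfl⟩ := hx'
      have hyF : y ∈ F := by
        rcases hy with h | h
        · exact h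
        · exact absurd (by simpa [Set.mem_range] using h) hy'
      rw [hfr, hfF y hyF] at hxy
      exact absurd hxy (hC2 i y hyF)
    · obtain ⟨i', rfl⟩ := hy'
      have hxF : x ∈ F := by
        rcases hx with h | h
        · exact h
        · exact absurd (by simpa [Set.mem_range] using h) hx'
      rw [hfr, hfF x hxF] at hxy
      exact absurd hxy.symm (hC2 i' x hxF)
    · have hxF : x ∈ F := by
        rcases hx with h | h
        · exact h
        · exact absurd (by simpa [Set.mem_range] using h) hx'
      have hyF : y ∈ F := by
        rcases hy with h | h
        · exact h
        · exact absurd (by simpa [Set.mem_range] using h) hy'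
      rw [hfF x hxF, hfF y hyF] at hxy
      exact (τ j₀).injective hxy
  obtain ⟨π, hπ⟩ := exists_perm_extend hs hinj
  set τ' : Fin n → Equiv.Perm ℤ := Function.update τ j₀ π with hτ'
  have hτ'V : τ' ∈ V := by
    apply hF
    intro j x hx
    by_cases hj : j = j₀
    · subst hj
      simp only [hτ', Function.update_self]
      rw [hπ x (Or.inl hx), hfF x hx]
    · simp [hτ', Function.update_of_ne hj]
  refine ⟨τ', hτ'V, shift ^ (-m) * (π * shift ^ m), ?_, ?_⟩
  · have h1 : shift ∈ Subgroup.closure (Set.range (Fin.cons shift τ')) :=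
      Subgroup.subset_closure ⟨0, rfl⟩
    have h2 : π ∈ Subgroup.closure (Set.range (Fin.cons shift τ')) :=
      Subgroup.subset_closure ⟨j₀.succ, by simp [Fin.cons_succ, hτ', Function.update_self]⟩
    exact mul_mem (Subgroup.zpow_mem _ h1 _) (mul_mem h2 (Subgroup.zpow_mem _ h1 _))
  · intro i
    simp only [Equiv.Perm.mul_apply]
    rw [shift_zpow, shift_zpow, hπ (a i + m) (Or.inr ⟨i, rfl⟩), hfr i]
    ring

/-- the set of tuples `(τ₁, …, τₙ)` such that `⟨σ, τ₁, …, τₙ⟩` is dense in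
`Sym ℤ` is residual. -/
theorem stmt_9 (n : ℕ) (hn : 1 ≤ n) :
    {τ : Fin n → Equiv.Perm ℤ |
        Dense ((Subgroup.closure (Set.range (Fin.cons shift τ)) :
          Subgroup (Equiv.Perm ℤ)) : Set (Equiv.Perm ℤ))} ∈
      residual (Fin n → Equiv.Perm ℤ) := by
  classical
  set S : (Σ k : ℕ, (Fin k → ℤ) × (Fin k → ℤ)) → Set (Fin n → Equiv.Perm ℤ) :=
    fun p => if Function.Injective p.2.1 ∧ Function.Injective p.2.2
      then hitSet n p.2.1 p.2.2 else Set.univ with hS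
  have key : ∀ p, S p ∈ residual (Fin n → Equiv.Perm ℤ) := by
    intro p
    simp only [hS]
    split_ifs with h
    · exact residual_of_dense_open (isOpen_hitSet _ _) (dense_hitSet hn h.1 h.2)
    · exact Filter.univ_mem
  have hmem : (⋂ p, S p) ∈ residual (Fin n → Equiv.Perm ℤ) :=
    (countable_iInter_mem).2 key
  refine Filter.mem_of_superset hmem ?_
  intro τ hτ
  simp only [Set.mem_iInter] at hτ
  intro π
  rw [mem_closure_iff]
  intro V hV hπV
  obtain ⟨F, hF⟩ := perm_cyl hV hπV
  set a : Fin F.card → ℤ := fun i => ((F.equivFin.symm i : F) : ℤ) with hadef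
  have ha : Function.Injective a := fun i j h =>
    F.equivFin.symm.injective (Subtype.ext h)
  set b : Fin F.card → ℤ := fun i => π (a i) with hbdef
  have hb : Function.Injective b := fun i j h => ha (π.injective h)
  have hhit := hτ ⟨F.card, a, b⟩
  simp only [hS, ha, hb, and_self, if_true] at hhit
  obtain ⟨g, hg, hgi⟩ := hhit
  refine ⟨g, ?_, hg⟩
  apply hF
  intro x hx
  have hax : a (F.equivFin ⟨x, hx⟩) = x := by simp [hadef]
  rw [← hax, hgi]
end
end

section
/- If φ and ψ are permutations of ℤ such that both cyclic subgroups ⟨φ⟩ and ⟨ψ⟩ are non-discrete in Sym(ℤ), then the cyclic subgroup generated by (φ,ψ) in Sym(ℤ) × Sym(ℤ) is non-discrete. -/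
noncomputable section

open Filter Topology Subgroup

lemma permCoe_embedding : Topology.IsEmbedding (fun π : Equiv.Perm ℤ => (π : ℤ → ℤ)) :=
  ⟨⟨rfl⟩, fun _ _ h => Equiv.coe_fn_injective h⟩

instance : T2Space (Equiv.Perm ℤ) := permCoe_embedding.t2Space

/-- basic open sets -/
lemma isOpen_agree (F : Finset ℤ) (g : Equiv.Perm ℤ) :
    IsOpen {π : Equiv.Perm ℤ | ∀ a ∈ F, π a = g a} := by
  have : {π : Equiv.Perm ℤ | ∀ a ∈ F, π a = g a}
      = (fun π : Equiv.Perm ℤ => (π : ℤ → ℤ)) ⁻¹' (Set.pi ↑F fun a => {g a}) := by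
    ext π; simp [Set.mem_pi]
  rw [this]
  exact (isOpen_set_pi F.finite_toSet (fun a _ => isOpen_discrete _)).preimage
    continuous_induced_dom

/-- infinite order -/
lemma inf_order (γ : Equiv.Perm ℤ) (h : ¬ DiscreteTopology (Subgroup.zpowers γ))
    {n : ℤ} (hn : n ≠ 0) : γ ^ n ≠ 1 := by
  intro heq
  apply h
  have hfin : IsOfFinOrder γ := by
    refine isOfFinOrder_iff_pow_eq_one.2 ⟨n.natAbs, Int.natAbs_pos.2 hn, ?_⟩
    rcases Int.natAbs_eq n with h' | h'
    · rw [← zpow_natCast, ← h', heq]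
    · rw [← zpow_natCast, ← neg_neg (n.natAbs : ℤ), ← h', zpow_neg, heq, inv_one]
  have : (Subgroup.zpowers γ : Set (Equiv.Perm ℤ)).Finite := finite_zpowers.2 hfin
  have := this.to_subtype
  infer_instance

/-- the key extraction from non-discreteness -/
lemma key (γ : Equiv.Perm ℤ) (h : ¬ DiscreteTopology (Subgroup.zpowers γ)) (F : Finset ℤ) :
    ∃ n : ℤ, γ ^ n ≠ 1 ∧ ∀ a ∈ F, (γ ^ n) a = a := by
  by_contra hc
  push_neg at hc
  apply h
  -- every point of zpowers γ is isolated
  rw [discreteTopology_iff_isOpen_singleton]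
  rintro ⟨x, hx⟩
  rcases Subgroup.mem_zpowers_iff.1 hx with ⟨m, rfl⟩
  have hU := isOpen_agree (F.image (γ ^ (-m) : Equiv.Perm ℤ)) (γ ^ m)
  have : ({⟨γ ^ m, hx⟩} : Set (Subgroup.zpowers γ))
      = (Subtype.val) ⁻¹' {π : Equiv.Perm ℤ | ∀ a ∈ F.image (γ ^ (-m) : Equiv.Perm ℤ), π a = (γ ^ m) a} := by
    ext ⟨y, hy⟩
    simp only [Set.mem_singleton_iff, Set.mem_preimage, Set.mem_setOf_eq, Subtype.mk.injEq]
    constructor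
    · rintro rfl; intro a _; rfl
    · intro hagree
      rcases Subgroup.mem_zpowers_iff.1 hy with ⟨n, rfl⟩
      have hfix : ∀ a ∈ F, ((γ ^ (n - m)) a = a) := by
        intro a ha
        have h1 := hagree ((γ ^ (-m) : Equiv.Perm ℤ) a) (Finset.mem_image_of_mem _ ha)
        have : (γ ^ (n - m)) a = (γ ^ n) ((γ ^ (-m) : Equiv.Perm ℤ) a) := by
          rw [← Equiv.Perm.mul_apply, ← zpow_add]; ring_nf
        rw [this, h1, ← Equiv.Perm.mul_apply, ← zpow_add, add_neg_cancel, zpow_zero,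
          Equiv.Perm.one_apply]
      have h1 : γ ^ (n - m) = 1 := by
        by_contra h1
        rcases hc (n - m) h1 with ⟨a, ha, hne⟩
        exact hne (hfix a ha)
      have : γ ^ n = γ ^ m := by
        have := congrArg (· * γ ^ m) h1
        simpa [zpow_sub, mul_assoc] using this
      simp [this]
  rw [this]
  exact hU.preimage continuous_subtype_val

/-- neighborhoods of 1 contain basic fixing sets -/
lemma mem_nhds_one {u : Set (Equiv.Perm ℤ)} (hu : u ∈ 𝓝 (1 : Equiv.Perm ℤ)) :
    ∃ F : Finset ℤ, {π : Equiv.Perm ℤ | ∀ a ∈ F, π a = a} ⊆ u := by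
  rw [nhds_induced, mem_comap] at hu
  rcases hu with ⟨s, hs, hsub⟩
  rw [nhds_pi, Filter.mem_pi'] at hs
  rcases hs with ⟨I, t, hti, hIt⟩
  refine ⟨I, fun π hπ => hsub ?_⟩
  refine hIt fun a ha => ?_
  have : (1 : Equiv.Perm ℤ) a ∈ t a := mem_of_mem_nhds (hti a)
  simpa [hπ a ha] using this

/-- if `⟨φ⟩` and `⟨ψ⟩` are both non-discrete in `Sym ℤ`, then `⟨(φ, ψ)⟩` is
non-discrete in `Sym ℤ × Sym ℤ`. -/
theorem stmt_15 (φ ψ : Equiv.Perm ℤ)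
    (hφ : ¬ DiscreteTopology (Subgroup.zpowers φ))
    (hψ : ¬ DiscreteTopology (Subgroup.zpowers ψ)) :
    ¬ DiscreteTopology (Subgroup.zpowers ((φ, ψ) : Equiv.Perm ℤ × Equiv.Perm ℤ)) := by
  intro hd
  set G := Subgroup.zpowers ((φ, ψ) : Equiv.Perm ℤ × Equiv.Perm ℤ)
  have h1 : ({(1 : G)} : Set G) ∈ 𝓝 (1 : G) := by
    rw [nhds_discrete]; exact mem_pure.2 rfl
  rw [nhds_induced, mem_comap] at h1
  rcases h1 with ⟨U, hU, hUsub⟩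
  rw [mem_nhds_prod_iff] at hU
  rcases hU with ⟨u, hu, v, hv, huv⟩
  rcases mem_nhds_one hu with ⟨F₁, hF₁⟩
  rcases mem_nhds_one hv with ⟨F₂, hF₂⟩
  rcases key φ hφ (F₁ ∪ F₂) with ⟨k, hk1, hkfix⟩
  rcases key ψ hψ (F₁ ∪ F₂) with ⟨m, hm1, hmfix⟩
  have hk0 : k ≠ 0 := fun h => hk1 (by simp [h])
  have hm0 : m ≠ 0 := fun h => hm1 (by simp [h])
  set n := k * m
  have hφfix : ∀ a ∈ F₁ ∪ F₂, (φ ^ n) a = a := by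
    intro a ha
    have : φ ^ n = (φ ^ k) ^ m := by rw [← zpow_mul]
    rw [this]
    exact Equiv.Perm.zpow_apply_eq_self_of_apply_eq_self (hkfix a ha) m
  have hψfix : ∀ a ∈ F₁ ∪ F₂, (ψ ^ n) a = a := by
    intro a ha
    have : ψ ^ n = (ψ ^ m) ^ k := by rw [← zpow_mul, mul_comm]
    rw [this]
    exact Equiv.Perm.zpow_apply_eq_self_of_apply_eq_self (hmfix a ha) k
  have hmem : ((φ, ψ) : Equiv.Perm ℤ × Equiv.Perm ℤ) ^ n ∈ G := Subgroup.zpow_mem _ (Subgroup.mem_zpowers _) n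
  have hin : (((φ, ψ) : Equiv.Perm ℤ × Equiv.Perm ℤ) ^ n) ∈ U := by
    apply huv
    constructor
    · exact hF₁ fun a ha => hφfix a (Finset.mem_union_left _ ha)
    · exact hF₂ fun a ha => hψfix a (Finset.mem_union_right _ ha)
  have : (⟨(φ, ψ) ^ n, hmem⟩ : G) = 1 := hUsub hin
  have hφn : φ ^ n = 1 := by
    have := congrArg (fun x : G => (x : Equiv.Perm ℤ × Equiv.Perm ℤ).1) this
    simpa using this
  exact inf_order φ hφ (mul_ne_zero hk0 hm0) hφn
end
end

section
/- Let G be a Hausdorff topological group and γ ∈ G such that the cyclic subgroup ⟨γ⟩ is non-discrete. Then for every n₀ ∈ ℕ, the set {γⁿ : n ≥ n₀} is dense in the closure of ⟨γ⟩. -/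
open Topology

noncomputable section

section aux

variable {G : Type*} [Group G] [TopologicalSpace G] [IsTopologicalGroup G] [T2Space G]

set_option linter.unusedSectionVars false in
lemma aux_key (γ : G) (h : ¬ DiscreteTopology (Subgroup.zpowers γ)) :
    ∀ U ∈ 𝓝 (1 : G), ∃ k : ℤ, k ≠ 0 ∧ γ ^ k ∈ U := by
  by_contra hc
  push_neg at hc
  obtain ⟨U, hU, hUk⟩ := hc
  apply h
  apply discreteTopology_iff_isOpen_singleton_one.mpr
  have : ({1} : Set (Subgroup.zpowers γ)) = Subtype.val ⁻¹' (interior U) := by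
    ext x
    constructor
    · rintro rfl
      exact mem_interior_iff_mem_nhds.mpr hU
    · intro hx
      obtain ⟨k, hk⟩ := x.2
      rcases eq_or_ne k 0 with rfl | hk0
      · ext; simpa using hk.symm
      · simp only [] at hk
        exact absurd (hk ▸ interior_subset hx) (hUk k hk0)
  rw [this]
  exact isOpen_interior.preimage continuous_subtype_val

set_option linter.unusedSectionVars false in
lemma aux_inf (γ : G) (h : ¬ DiscreteTopology (Subgroup.zpowers γ)) : ¬ IsOfFinOrder γ := by
  intro hf
  apply h
  have : Finite (Subgroup.zpowers γ) := hf.finite_zpowers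
  exact Finite.instDiscreteTopology

lemma aux_one_mem (γ : G) (h : ¬ DiscreteTopology (Subgroup.zpowers γ)) (N : ℕ) :
    (1 : G) ∈ closure {x : G | ∃ n : ℕ, N ≤ n ∧ x = γ ^ n} := by
  have hinj : Function.Injective fun k : ℤ => γ ^ k :=
    injective_zpow_iff_not_isOfFinOrder.mpr (aux_inf γ h)
  rw [mem_closure_iff_nhds]
  intro U hU
  set V : Set G := U ∩ U⁻¹ with hV
  have hVmem : V ∈ 𝓝 (1 : G) := Filter.inter_mem hU (inv_mem_nhds_one G hU)
  set F : Set G := (fun k : ℤ => γ ^ k) '' {k : ℤ | k ≠ 0 ∧ k.natAbs < N} with hF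
  have hFfin : F.Finite := by
    apply Set.Finite.image
    apply Set.Finite.subset (Set.finite_Icc (-(N : ℤ)) N)
    intro k hk
    have := hk.2
    simp only [Set.mem_Icc]
    omega
  have h1F : (1 : G) ∉ F := by
    rintro ⟨k, ⟨hk0, _⟩, hk⟩
    exact hk0 (hinj (by simpa using hk))
  have hW : V \ F ∈ 𝓝 (1 : G) :=
    Filter.diff_mem hVmem (hFfin.isClosed.isOpen_compl.mem_nhds h1F)
  obtain ⟨k, hk0, hkW⟩ := aux_key γ h _ hW
  have hkN : N ≤ k.natAbs := by
    by_contra hlt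
    exact hkW.2 ⟨k, ⟨hk0, by omega⟩, rfl⟩
  refine ⟨γ ^ k.natAbs, ?_, k.natAbs, hkN, rfl⟩
  rcases le_or_gt 0 k with hk' | hk'
  · have : γ ^ k.natAbs = γ ^ k := by
      rw [← zpow_natCast]; congr 1; omega
    rw [this]
    exact hkW.1.1
  · have : γ ^ k.natAbs = (γ ^ k)⁻¹ := by
      rw [← zpow_natCast, ← zpow_neg]; congr 1; omega
    rw [this]
    exact Set.mem_inv.mp hkW.1.2

end aux

/-- in a Hausdorff topological group, if `⟨γ⟩` is non-discrete then for every
`n₀` the set `{γ ^ n : n ≥ n₀}` is dense in the closure of `⟨γ⟩`. -/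
theorem stmt_16 {G : Type*} [Group G] [TopologicalSpace G] [IsTopologicalGroup G] [T2Space G]
    (γ : G) (h : ¬ DiscreteTopology (Subgroup.zpowers γ)) (n₀ : ℕ) :
    closure ((Subgroup.zpowers γ : Subgroup G) : Set G) ⊆
      closure {x : G | ∃ n : ℕ, n₀ ≤ n ∧ x = γ ^ n} := by
  apply closure_minimal _ isClosed_closure
  rintro x ⟨k, rfl⟩
  rw [mem_closure_iff_nhds]
  intro U hU
  have hU' : (fun y => γ ^ k * y) ⁻¹' U ∈ 𝓝 (1 : G) := by
    apply (continuous_mul_left (γ ^ k)).continuousAt.preimage_mem_nhds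
    simpa using hU
  obtain ⟨y, hyU, n, hn, rfl⟩ :=
    mem_closure_iff_nhds.mp (aux_one_mem γ h (n₀ + k.natAbs)) _ hU'
  refine ⟨γ ^ k * γ ^ n, hyU, (k + n).toNat, by omega, ?_⟩
  rw [← zpow_natCast γ (k + n).toNat, ← zpow_natCast γ n, ← zpow_add]
  congr 1
  omega
end
end

section
/- Let Γ be a group, H a completely metrizable topological group, Ω a completely metrizable subspace of a topological group, and for each ω ∈ Ω let f_ω : Γ → H be a homomorphism such that for each fixed g ∈ Γ the map ω ↦ f_ω(g) is continuous. Suppose Γ is countable and there is a sequence (ω_n) in Ω such that (f_{ω_n}) is eventually faithful (for each g ≠ 1 there is n₀ with f_{ω_n}(g) ≠ 1 for all n ≥ n₀) and {ω_n : n ≥ n₀} is dense in Ω for every n₀. If H is Hausdorff, then the set {ω ∈ Ω : f_ω is injective} is residual in Ω; in particular it is nonempty. -/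
noncomputable section

/-- abstract Baire-category argument producing a faithful homomorphism from a
parametrized family with an eventually faithful, eventually dense sequence of parameters. -/
theorem stmt_18 {Γ H Ω : Type*} [Group Γ] [Countable Γ]
    [Group H] [MetricSpace H] [CompleteSpace H] [IsTopologicalGroup H]
    [MetricSpace Ω] [CompleteSpace Ω]
    (f : Ω → (Γ →* H)) (hcont : ∀ g : Γ, Continuous fun ω => f ω g)
    (ωseq : ℕ → Ω)
    (hef : ∀ g : Γ, g ≠ 1 → ∃ n₀ : ℕ, ∀ n : ℕ, n₀ ≤ n → f (ωseq n) g ≠ 1)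
    (hdense : ∀ n₀ : ℕ, Dense {x : Ω | ∃ n : ℕ, n₀ ≤ n ∧ ωseq n = x}) :
    {ω : Ω | Function.Injective (f ω)} ∈ residual Ω ∧
      {ω : Ω | Function.Injective (f ω)}.Nonempty := by
  have hΩ : Nonempty Ω := ⟨ωseq 0⟩
  have key : {ω : Ω | Function.Injective (f ω)} =
      ⋂ g : Γ, {ω : Ω | g ≠ 1 → f ω g ≠ 1} := by
    ext ω
    simp only [Set.mem_iInter, Set.mem_setOf_eq]
    constructor
    · intro h g hg hfg
      exact hg (h (by rw [hfg, map_one]))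
    · intro h
      rw [injective_iff_map_eq_one]
      intro a ha
      by_contra hne
      exact h a hne ha
  have hmem : {ω : Ω | Function.Injective (f ω)} ∈ residual Ω := by
    rw [key]
    refine countable_iInter_mem.mpr ?_
    intro g
    by_cases hg : g = 1
    · simp [hg]
    · have hset : {ω : Ω | g ≠ 1 → f ω g ≠ 1} = {ω : Ω | f ω g ≠ 1} := by
        ext ω; simp [hg]
      rw [hset]
      have hopen : IsOpen {ω : Ω | f ω g ≠ 1} :=
        IsOpen.preimage (hcont g) isOpen_ne
      have hdense' : Dense {ω : Ω | f ω g ≠ 1} := by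
        obtain ⟨n₀, hn₀⟩ := hef g hg
        refine (hdense n₀).mono ?_
        rintro x ⟨n, hn, rfl⟩
        exact hn₀ n hn
      exact residual_of_dense_open hopen hdense'
  exact ⟨hmem, (dense_of_mem_residual hmem).nonempty⟩
end
end
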